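/- arXiv:2507.15284 — 9 statements merged into one kernel-verified Lean document; each statement's English description precedes it below -/
import Mathlib

section
/- Gibbons–Hawking ansatz: let U ⊆ ℍ° be open, let V : U → ℝ be smooth with V > 0 and satisfying the axisymmetric Laplace equation V_{ρρ} + ρ⁻¹V_ρ + V_{zz} = 0, and let F : U → ℝ be smooth with F_ρ = −ρV_z and F_z = ρV_ρ. Define Φ := ρ⁻¹[[V⁻¹, V⁻¹F],[V⁻¹F, ρ²V + V⁻¹F²]] and ν := ½·log V. Then Φ is symmetric positive definite with det Φ ≡ 1, Φ satisfies the axisymmetric harmonic-map equation on U, and ν is an augmentation for Φ; that is, (Φ, ν) is an augmented harmonic map. -/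
noncomputable section

open Real Topology Filter Matrix MeasureTheory

abbrev Mat2 : Type := Matrix (Fin 2) (Fin 2) ℝ

/-- Partial derivative in the first variable (`ρ`). -/
def pd1 (f : ℝ × ℝ → ℝ) (p : ℝ × ℝ) : ℝ := deriv (fun t => f (t, p.2)) p.1

/-- Partial derivative in the second variable (`z`). -/
def pd2 (f : ℝ × ℝ → ℝ) (p : ℝ × ℝ) : ℝ := deriv (fun t => f (p.1, t)) p.2

/-- Entrywise partial derivative (in `ρ`) of a matrix-valued function. -/
def mpd1 (F : ℝ × ℝ → Mat2) (p : ℝ × ℝ) : Mat2 :=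
  Matrix.of fun i j => pd1 (fun q => F q i j) p

/-- Entrywise partial derivative (in `z`) of a matrix-valued function. -/
def mpd2 (F : ℝ × ℝ → Mat2) (p : ℝ × ℝ) : Mat2 :=
  Matrix.of fun i j => pd2 (fun q => F q i j) p

/-- The open right half plane `ℍ° = {(ρ, z) : ρ > 0}`. -/
def Hplane : Set (ℝ × ℝ) := {p | 0 < p.1}

/-- A matrix-valued map is smooth on a set if each entry is `C^∞` there. -/
def SmoothMatOn (F : ℝ × ℝ → Mat2) (U : Set (ℝ × ℝ)) : Prop :=
  ∀ i j, ContDiffOn ℝ (⊤ : ℕ∞) (fun q => F q i j) U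

/-- The axisymmetric harmonic-map equation
`∂_ρ(ρ Φ⁻¹ ∂_ρΦ) + ∂_z(ρ Φ⁻¹ ∂_zΦ) = 0` on `U`. -/
def axiHarmonicOn (Φ : ℝ × ℝ → Mat2) (U : Set (ℝ × ℝ)) : Prop :=
  ∀ p ∈ U,
    mpd1 (fun q => q.1 • ((Φ q)⁻¹ * mpd1 Φ q)) p +
      mpd2 (fun q => q.1 • ((Φ q)⁻¹ * mpd2 Φ q)) p = 0

/-- `𝒰 := I + ρ Φ⁻¹ ∂_ρΦ`. -/
def Umat (Φ : ℝ × ℝ → Mat2) (p : ℝ × ℝ) : Mat2 := 1 + p.1 • ((Φ p)⁻¹ * mpd1 Φ p)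

/-- `𝒱 := ρ Φ⁻¹ ∂_zΦ`. -/
def Vmat (Φ : ℝ × ℝ → Mat2) (p : ℝ × ℝ) : Mat2 := p.1 • ((Φ p)⁻¹ * mpd2 Φ p)

/-- `ν` is an augmentation for `Φ` on `U`. -/
def IsAugmentationOn (Φ : ℝ × ℝ → Mat2) (ν : ℝ × ℝ → ℝ) (U : Set (ℝ × ℝ)) : Prop :=
  ContDiffOn ℝ (⊤ : ℕ∞) ν U ∧ ∀ p ∈ U,
    pd2 ν p = (4 * p.1)⁻¹ * (Umat Φ p * Vmat Φ p).trace ∧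
    pd1 ν p = -(2 * p.1)⁻¹ +
      (8 * p.1)⁻¹ * (Umat Φ p * Umat Φ p - Vmat Φ p * Vmat Φ p).trace

/-- `r = √(ρ² + z²)`. -/
def rr (p : ℝ × ℝ) : ℝ := Real.sqrt (p.1 ^ 2 + p.2 ^ 2)

/-- The action `P.Φ := (P⁻¹)ᵀ Φ P⁻¹` of `GL(2,ℝ)` on matrices. -/
def matAct (P M : Mat2) : Mat2 := (P⁻¹)ᵀ * M * P⁻¹

/-- The action of `GL(2,ℝ)` on matrix-valued maps. -/
def mapAct (P : Mat2) (Φ : ℝ × ℝ → Mat2) : ℝ × ℝ → Mat2 := fun q => matAct P (Φ q)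

section Toolkit
variable {E : Type*} [NormedAddCommGroup E] [NormedSpace ℝ E]
variable {U : Set (ℝ × ℝ)} {f g : ℝ × ℝ → E} {p : ℝ × ℝ}

lemma mem_slice1 (hU : IsOpen U) (hp : p ∈ U) : ∀ᶠ t in 𝓝 p.1, (t, p.2) ∈ U := by
  have hc : Continuous (fun t : ℝ => (t, p.2)) := continuous_id.prodMk continuous_const
  have : Tendsto (fun t : ℝ => (t, p.2)) (𝓝 p.1) (𝓝 p) := by
    exact hc.continuousAt (x := p.1)
  exact this (hU.mem_nhds hp)

lemma mem_slice2 (hU : IsOpen U) (hp : p ∈ U) : ∀ᶠ t in 𝓝 p.2, (p.1, t) ∈ U := by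
  have hc : Continuous (fun t : ℝ => (p.1, t)) := continuous_const.prodMk continuous_id
  have : Tendsto (fun t : ℝ => (p.1, t)) (𝓝 p.2) (𝓝 p) := by
    exact hc.continuousAt (x := p.2)
  exact this (hU.mem_nhds hp)

lemma pd1_congr {f g : ℝ × ℝ → ℝ} (hU : IsOpen U) (hfg : ∀ q ∈ U, f q = g q) (hp : p ∈ U) : pd1 f p = pd1 g p := by
  have h : (fun t => f (t, p.2)) =ᶠ[𝓝 p.1] fun t => g (t, p.2) :=
    (mem_slice1 hU hp).mono fun t ht => hfg _ ht
  exact h.deriv_eq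

lemma pd2_congr {f g : ℝ × ℝ → ℝ} (hU : IsOpen U) (hfg : ∀ q ∈ U, f q = g q) (hp : p ∈ U) : pd2 f p = pd2 g p := by
  have h : (fun t => f (p.1, t)) =ᶠ[𝓝 p.2] fun t => g (p.1, t) :=
    (mem_slice2 hU hp).mono fun t ht => hfg _ ht
  exact h.deriv_eq

lemma slice1_hasDerivAt_fderiv (hf : DifferentiableAt ℝ f p) :
    HasDerivAt (fun t => f (t, p.2)) (fderiv ℝ f p (1, 0)) p.1 := by
  have h1 : HasDerivAt (fun t : ℝ => (t, p.2)) ((1 : ℝ), (0 : ℝ)) p.1 :=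
    (hasDerivAt_id _).prodMk (hasDerivAt_const _ _)
  have h2 : HasFDerivAt f (fderiv ℝ f p) ((fun t : ℝ => (t, p.2)) p.1) := by
    simpa using hf.hasFDerivAt
  exact h2.comp_hasDerivAt p.1 h1

lemma slice2_hasDerivAt_fderiv (hf : DifferentiableAt ℝ f p) :
    HasDerivAt (fun t => f (p.1, t)) (fderiv ℝ f p (0, 1)) p.2 := by
  have h1 : HasDerivAt (fun t : ℝ => (p.1, t)) ((0 : ℝ), (1 : ℝ)) p.2 :=
    (hasDerivAt_const _ _).prodMk (hasDerivAt_id _)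
  have h2 : HasFDerivAt f (fderiv ℝ f p) ((fun t : ℝ => (p.1, t)) p.2) := by
    simpa using hf.hasFDerivAt
  exact h2.comp_hasDerivAt p.2 h1

lemma pd1_eq_fderiv {f : ℝ × ℝ → ℝ} (hf : DifferentiableAt ℝ f p) : pd1 f p = fderiv ℝ f p (1, 0) :=
  (slice1_hasDerivAt_fderiv hf).deriv

lemma pd2_eq_fderiv {f : ℝ × ℝ → ℝ} (hf : DifferentiableAt ℝ f p) : pd2 f p = fderiv ℝ f p (0, 1) :=
  (slice2_hasDerivAt_fderiv hf).deriv

lemma diffAt_of_smoothOn (hU : IsOpen U) (hf : ContDiffOn ℝ (⊤ : ℕ∞) f U) (hp : p ∈ U) :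
    DifferentiableAt ℝ f p :=
  (hf.contDiffAt (hU.mem_nhds hp)).differentiableAt (by simp)

lemma slice1_hasDerivAt {f : ℝ × ℝ → ℝ} (hU : IsOpen U) (hf : ContDiffOn ℝ (⊤ : ℕ∞) f U) (hp : p ∈ U) :
    HasDerivAt (fun t => f (t, p.2)) (pd1 f p) p.1 := by
  have h := slice1_hasDerivAt_fderiv (diffAt_of_smoothOn hU hf hp)
  rwa [pd1_eq_fderiv (diffAt_of_smoothOn hU hf hp)]

lemma slice2_hasDerivAt {f : ℝ × ℝ → ℝ} (hU : IsOpen U) (hf : ContDiffOn ℝ (⊤ : ℕ∞) f U) (hp : p ∈ U) :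
    HasDerivAt (fun t => f (p.1, t)) (pd2 f p) p.2 := by
  have h := slice2_hasDerivAt_fderiv (diffAt_of_smoothOn hU hf hp)
  rwa [pd2_eq_fderiv (diffAt_of_smoothOn hU hf hp)]

lemma contDiffOn_fderiv (hU : IsOpen U) (hf : ContDiffOn ℝ (⊤ : ℕ∞) f U) :
    ContDiffOn ℝ (⊤ : ℕ∞) (fderiv ℝ f) U :=
  hf.fderiv_of_isOpen hU (by simp)

lemma contDiffOn_pd1 {f : ℝ × ℝ → ℝ} (hU : IsOpen U) (hf : ContDiffOn ℝ (⊤ : ℕ∞) f U) :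
    ContDiffOn ℝ (⊤ : ℕ∞) (pd1 f) U :=
  ((contDiffOn_fderiv hU hf).clm_apply contDiffOn_const).congr
    fun q hq => pd1_eq_fderiv (diffAt_of_smoothOn hU hf hq)

lemma contDiffOn_pd2 {f : ℝ × ℝ → ℝ} (hU : IsOpen U) (hf : ContDiffOn ℝ (⊤ : ℕ∞) f U) :
    ContDiffOn ℝ (⊤ : ℕ∞) (pd2 f) U :=
  ((contDiffOn_fderiv hU hf).clm_apply contDiffOn_const).congr
    fun q hq => pd2_eq_fderiv (diffAt_of_smoothOn hU hf hq)

lemma pd_comm {f : ℝ × ℝ → ℝ} (hU : IsOpen U) (hf : ContDiffOn ℝ (⊤ : ℕ∞) f U) (hp : p ∈ U) :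
    pd1 (pd2 f) p = pd2 (pd1 f) p := by
  have hC : ContDiffAt ℝ (⊤ : ℕ∞) f p := hf.contDiffAt (hU.mem_nhds hp)
  have h2top : (2 : WithTop ℕ∞) ≤ ((⊤:ℕ∞) : WithTop ℕ∞) := by
    have : ((2:ℕ∞) : WithTop ℕ∞) ≤ ((⊤:ℕ∞) : WithTop ℕ∞) := WithTop.coe_le_coe.mpr le_top
    simpa using this
  have hsym : IsSymmSndFDerivAt ℝ f p := hC.isSymmSndFDerivAt (by simpa using h2top)
  have hdf : DifferentiableAt ℝ (fderiv ℝ f) p :=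
    diffAt_of_smoothOn hU (contDiffOn_fderiv hU hf) hp
  have h12 : pd1 (pd2 f) p = fderiv ℝ (fderiv ℝ f) p (1, 0) (0, 1) := by
    have he : pd1 (pd2 f) p = pd1 (fun q => fderiv ℝ f q (0, 1)) p :=
      pd1_congr hU (fun q hq => pd2_eq_fderiv (diffAt_of_smoothOn hU hf hq)) hp
    rw [he]
    have h1 := slice1_hasDerivAt_fderiv hdf
    have h2 := h1.clm_apply (hasDerivAt_const p.1 ((0 : ℝ), (1 : ℝ)))
    simp only [add_zero, map_zero] at h2
    exact h2.deriv
  have h21 : pd2 (pd1 f) p = fderiv ℝ (fderiv ℝ f) p (0, 1) (1, 0) := by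
    have he : pd2 (pd1 f) p = pd2 (fun q => fderiv ℝ f q (1, 0)) p :=
      pd2_congr hU (fun q hq => pd1_eq_fderiv (diffAt_of_smoothOn hU hf hq)) hp
    rw [he]
    have h1 := slice2_hasDerivAt_fderiv hdf
    have h2 := h1.clm_apply (hasDerivAt_const p.2 ((1 : ℝ), (0 : ℝ)))
    simp only [add_zero, map_zero] at h2
    exact h2.deriv
  rw [h12, h21, hsym]

end Toolkit






section GHaux

def gPhi (V F : ℝ × ℝ → ℝ) (p : ℝ × ℝ) : Mat2 :=
  p.1⁻¹ • !![(V p)⁻¹, (V p)⁻¹ * F p;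
      (V p)⁻¹ * F p, p.1 ^ 2 * V p + (V p)⁻¹ * (F p) ^ 2]

def gPhiInv (V F : ℝ × ℝ → ℝ) (p : ℝ × ℝ) : Mat2 :=
  p.1⁻¹ • !![p.1 ^ 2 * V p + (V p)⁻¹ * (F p) ^ 2, -((V p)⁻¹ * F p);
      -((V p)⁻¹ * F p), (V p)⁻¹]

def gA (V F : ℝ × ℝ → ℝ) (q : ℝ × ℝ) : Mat2 :=
  !![-1 - q.1 * (V q)⁻¹ * pd1 V q + (V q)⁻¹ ^ 2 * F q * pd2 V q,
     -(q.1 ^ 2) * pd2 V q + (V q)⁻¹ ^ 2 * (F q) ^ 2 * pd2 V q - 2 * F q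
       - 2 * q.1 * (V q)⁻¹ * pd1 V q * F q;
     -((V q)⁻¹ ^ 2 * pd2 V q),
     1 + q.1 * (V q)⁻¹ * pd1 V q - (V q)⁻¹ ^ 2 * F q * pd2 V q]

def gB (V F : ℝ × ℝ → ℝ) (q : ℝ × ℝ) : Mat2 :=
  !![-(q.1 * (V q)⁻¹ * pd2 V q) - (V q)⁻¹ ^ 2 * F q * pd1 V q,
     -(2 * q.1 * (V q)⁻¹ * pd2 V q * F q) + q.1 ^ 2 * pd1 V q
       - (V q)⁻¹ ^ 2 * (F q) ^ 2 * pd1 V q;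
     (V q)⁻¹ ^ 2 * pd1 V q,
     (V q)⁻¹ ^ 2 * F q * pd1 V q + q.1 * (V q)⁻¹ * pd2 V q]

variable {V F : ℝ × ℝ → ℝ} {U : Set (ℝ × ℝ)} {p : ℝ × ℝ}

lemma gPhi_entry00 : (fun q => gPhi V F q 0 0) = fun q => q.1⁻¹ * (V q)⁻¹ := by
  funext q; simp [gPhi]

lemma gPhi_entry01 : (fun q => gPhi V F q 0 1) = fun q => q.1⁻¹ * ((V q)⁻¹ * F q) := by
  funext q; simp [gPhi]

lemma gPhi_entry10 : (fun q => gPhi V F q 1 0) = fun q => q.1⁻¹ * ((V q)⁻¹ * F q) := by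
  funext q; simp [gPhi]

lemma gPhi_entry11 :
    (fun q => gPhi V F q 1 1) = fun q => q.1⁻¹ * (q.1 ^ 2 * V q + (V q)⁻¹ * (F q) ^ 2) := by
  funext q; simp [gPhi]

lemma gPhi_mul_inv (hρ : p.1 ≠ 0) (hv : V p ≠ 0) :
    gPhi V F p * gPhiInv V F p = 1 := by
  ext i j
  fin_cases i <;> fin_cases j <;>
    simp [gPhi, gPhiInv, Matrix.mul_apply, Fin.sum_univ_two, Matrix.one_apply] <;>
    field_simp <;> ring

lemma gPhi_inv_eq (hρ : p.1 ≠ 0) (hv : V p ≠ 0) :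
    (gPhi V F p)⁻¹ = gPhiInv V F p :=
  Matrix.inv_eq_right_inv (gPhi_mul_inv hρ hv)

end GHaux

section GHmain
variable {V F : ℝ × ℝ → ℝ} {U : Set (ℝ × ℝ)} {p : ℝ × ℝ}

lemma L_A (hUopen : IsOpen U) (hUH : ∀ q ∈ U, (0:ℝ) < q.1)
    (hV : ContDiffOn ℝ (⊤ : ℕ∞) V U) (hVpos : ∀ q ∈ U, 0 < V q)
    (hF : ContDiffOn ℝ (⊤ : ℕ∞) F U)
    (hF1 : ∀ q ∈ U, pd1 F q = -(q.1 * pd2 V q)) (hp : p ∈ U) :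
    p.1 • ((gPhi V F p)⁻¹ * mpd1 (gPhi V F) p) = gA V F p := by
  have hρ : p.1 ≠ 0 := (hUH p hp).ne'
  have hv : V p ≠ 0 := (hVpos p hp).ne'
  have hv1 := slice1_hasDerivAt hUopen hV hp
  have hfd1 := slice1_hasDerivAt hUopen hF hp
  have hw1 := hv1.inv hv
  have e00 : pd1 (fun q => q.1⁻¹ * (V q)⁻¹) p = _ := ((hasDerivAt_inv hρ).mul hw1).deriv
  have e01 : pd1 (fun q => q.1⁻¹ * ((V q)⁻¹ * F q)) p = _ :=
    ((hasDerivAt_inv hρ).mul (hw1.mul hfd1)).deriv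
  have e11 : pd1 (fun q => q.1⁻¹ * (q.1 ^ 2 * V q + (V q)⁻¹ * (F q) ^ 2)) p = _ :=
    ((hasDerivAt_inv hρ).mul (((hasDerivAt_pow 2 p.1).mul hv1).add (hw1.mul (hfd1.pow 2)))).deriv
  simp only [Prod.mk.eta, Pi.inv_apply, Pi.mul_apply, Pi.pow_apply, Pi.add_apply, Pi.sub_apply, Pi.neg_apply, id_eq] at e00 e01 e11
  rw [gPhi_inv_eq hρ hv]
  ext i j
  fin_cases i <;> fin_cases j <;>
    simp only [Matrix.smul_apply, Matrix.mul_apply, Fin.sum_univ_two, mpd1, Matrix.of_apply,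
      smul_eq_mul, gPhiInv, gA, Matrix.cons_val', Matrix.cons_val_zero, Matrix.cons_val_one,
      Matrix.head_cons, Matrix.empty_val', Matrix.cons_val_fin_one, Matrix.head_fin_const,
      Fin.zero_eta, Fin.mk_one] <;>
    simp only [gPhi_entry00, gPhi_entry01, gPhi_entry10, gPhi_entry11] <;>
    simp only [e00, e01, e11, hF1 p hp] <;>
    field_simp <;> ring

lemma L_B (hUopen : IsOpen U) (hUH : ∀ q ∈ U, (0:ℝ) < q.1)
    (hV : ContDiffOn ℝ (⊤ : ℕ∞) V U) (hVpos : ∀ q ∈ U, 0 < V q)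
    (hF : ContDiffOn ℝ (⊤ : ℕ∞) F U)
    (hF2 : ∀ q ∈ U, pd2 F q = q.1 * pd1 V q) (hp : p ∈ U) :
    p.1 • ((gPhi V F p)⁻¹ * mpd2 (gPhi V F) p) = gB V F p := by
  have hρ : p.1 ≠ 0 := (hUH p hp).ne'
  have hv : V p ≠ 0 := (hVpos p hp).ne'
  have hv2 := slice2_hasDerivAt hUopen hV hp
  have hfd2 := slice2_hasDerivAt hUopen hF hp
  have hw2 := hv2.inv hv
  have e00 : pd2 (fun q => q.1⁻¹ * (V q)⁻¹) p = _ :=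
    ((hasDerivAt_const p.2 (p.1⁻¹)).mul hw2).deriv
  have e01 : pd2 (fun q => q.1⁻¹ * ((V q)⁻¹ * F q)) p = _ :=
    ((hasDerivAt_const p.2 (p.1⁻¹)).mul (hw2.mul hfd2)).deriv
  have e11 : pd2 (fun q => q.1⁻¹ * (q.1 ^ 2 * V q + (V q)⁻¹ * (F q) ^ 2)) p = _ :=
    ((hasDerivAt_const p.2 (p.1⁻¹)).mul
      (((hasDerivAt_const p.2 (p.1 ^ 2)).mul hv2).add (hw2.mul (hfd2.pow 2)))).deriv
  simp only [Prod.mk.eta, Pi.inv_apply, Pi.mul_apply, Pi.pow_apply, Pi.add_apply, Pi.sub_apply, Pi.neg_apply, id_eq] at e00 e01 e11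
  rw [gPhi_inv_eq hρ hv]
  ext i j
  fin_cases i <;> fin_cases j <;>
    simp only [Matrix.smul_apply, Matrix.mul_apply, Fin.sum_univ_two, mpd2, Matrix.of_apply,
      smul_eq_mul, gPhiInv, gB, Matrix.cons_val', Matrix.cons_val_zero, Matrix.cons_val_one,
      Matrix.head_cons, Matrix.empty_val', Matrix.cons_val_fin_one, Matrix.head_fin_const,
      Fin.zero_eta, Fin.mk_one] <;>
    simp only [gPhi_entry00, gPhi_entry01, gPhi_entry10, gPhi_entry11] <;>
    simp only [e00, e01, e11, hF2 p hp] <;>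
    field_simp <;> ring

lemma mpd1_congr {Y Z : ℝ × ℝ → Mat2} (hUopen : IsOpen U)
    (h : ∀ q ∈ U, Y q = Z q) (hp : p ∈ U) : mpd1 Y p = mpd1 Z p := by
  ext i j
  show pd1 (fun q => Y q i j) p = pd1 (fun q => Z q i j) p
  exact pd1_congr hUopen (fun q hq => by rw [h q hq]) hp

lemma mpd2_congr {Y Z : ℝ × ℝ → Mat2} (hUopen : IsOpen U)
    (h : ∀ q ∈ U, Y q = Z q) (hp : p ∈ U) : mpd2 Y p = mpd2 Z p := by
  ext i j
  show pd2 (fun q => Y q i j) p = pd2 (fun q => Z q i j) p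
  exact pd2_congr hUopen (fun q hq => by rw [h q hq]) hp

lemma gA_e00 : (fun q => gA V F q 0 0)
    = fun q => -1 - q.1 * (V q)⁻¹ * pd1 V q + (V q)⁻¹ ^ 2 * F q * pd2 V q := by
  funext q; simp [gA]

lemma gA_e01 : (fun q => gA V F q 0 1)
    = fun q => -(q.1 ^ 2) * pd2 V q + (V q)⁻¹ ^ 2 * (F q) ^ 2 * pd2 V q - 2 * F q
      - 2 * q.1 * (V q)⁻¹ * pd1 V q * F q := by
  funext q; simp [gA]

lemma gA_e10 : (fun q => gA V F q 1 0) = fun q => -((V q)⁻¹ ^ 2 * pd2 V q) := by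
  funext q; simp [gA]

lemma gA_e11 : (fun q => gA V F q 1 1)
    = fun q => 1 + q.1 * (V q)⁻¹ * pd1 V q - (V q)⁻¹ ^ 2 * F q * pd2 V q := by
  funext q; simp [gA]

lemma gB_e00 : (fun q => gB V F q 0 0)
    = fun q => -(q.1 * (V q)⁻¹ * pd2 V q) - (V q)⁻¹ ^ 2 * F q * pd1 V q := by
  funext q; simp [gB]

lemma gB_e01 : (fun q => gB V F q 0 1)
    = fun q => -(2 * q.1 * (V q)⁻¹ * pd2 V q * F q) + q.1 ^ 2 * pd1 V q
      - (V q)⁻¹ ^ 2 * (F q) ^ 2 * pd1 V q := by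
  funext q; simp [gB]

lemma gB_e10 : (fun q => gB V F q 1 0) = fun q => (V q)⁻¹ ^ 2 * pd1 V q := by
  funext q; simp [gB]

lemma gB_e11 : (fun q => gB V F q 1 1)
    = fun q => (V q)⁻¹ ^ 2 * F q * pd1 V q + q.1 * (V q)⁻¹ * pd2 V q := by
  funext q; simp [gB]

set_option maxHeartbeats 4000000 in
lemma L_harm (hUopen : IsOpen U) (hUH : ∀ q ∈ U, (0:ℝ) < q.1)
    (hV : ContDiffOn ℝ (⊤ : ℕ∞) V U) (hVpos : ∀ q ∈ U, 0 < V q)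
    (hVharm : ∀ q ∈ U, pd1 (pd1 V) q + q.1⁻¹ * pd1 V q + pd2 (pd2 V) q = 0)
    (hF : ContDiffOn ℝ (⊤ : ℕ∞) F U)
    (hF1 : ∀ q ∈ U, pd1 F q = -(q.1 * pd2 V q))
    (hF2 : ∀ q ∈ U, pd2 F q = q.1 * pd1 V q) :
    axiHarmonicOn (gPhi V F) U := by
  intro p hp
  have hρ : p.1 ≠ 0 := (hUH p hp).ne'
  have hv : V p ≠ 0 := (hVpos p hp).ne'
  have hv1 := slice1_hasDerivAt hUopen hV hp
  have hv2 := slice2_hasDerivAt hUopen hV hp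
  have hfd1 := slice1_hasDerivAt hUopen hF hp
  have hfd2 := slice2_hasDerivAt hUopen hF hp
  have hw1 := hv1.inv hv
  have hw2 := hv2.inv hv
  have hq11 := slice1_hasDerivAt hUopen (contDiffOn_pd1 hUopen hV) hp
  have hq21 := slice1_hasDerivAt hUopen (contDiffOn_pd2 hUopen hV) hp
  have hq12 := slice2_hasDerivAt hUopen (contDiffOn_pd1 hUopen hV) hp
  have hq22 := slice2_hasDerivAt hUopen (contDiffOn_pd2 hUopen hV) hp
  have hA : mpd1 (fun q => q.1 • ((gPhi V F q)⁻¹ * mpd1 (gPhi V F) q)) p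
      = mpd1 (gA V F) p :=
    mpd1_congr hUopen (fun q hq => L_A hUopen hUH hV hVpos hF hF1 hq) hp
  have hB : mpd2 (fun q => q.1 • ((gPhi V F q)⁻¹ * mpd2 (gPhi V F) q)) p
      = mpd2 (gB V F) p :=
    mpd2_congr hUopen (fun q hq => L_B hUopen hUH hV hVpos hF hF2 hq) hp
  rw [hA, hB]
  have hsymm : pd1 (pd2 V) p = pd2 (pd1 V) p := pd_comm hUopen hV hp
  have h22 : pd2 (pd2 V) p = -pd1 (pd1 V) p - p.1⁻¹ * pd1 V p := by
    linarith [hVharm p hp]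
  have eA00 : pd1 (fun q => -1 - q.1 * (V q)⁻¹ * pd1 V q + (V q)⁻¹ ^ 2 * F q * pd2 V q) p = _ :=
    (((hasDerivAt_const p.1 (-1:ℝ)).sub (((hasDerivAt_id p.1).mul hw1).mul hq11)).add
      (((hw1.pow 2).mul hfd1).mul hq21)).deriv
  have eA01 : pd1 (fun q => -(q.1 ^ 2) * pd2 V q + (V q)⁻¹ ^ 2 * (F q) ^ 2 * pd2 V q - 2 * F q
      - 2 * q.1 * (V q)⁻¹ * pd1 V q * F q) p = _ :=
    (((((hasDerivAt_pow 2 p.1).neg).mul hq21).add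
        (((hw1.pow 2).mul (hfd1.pow 2)).mul hq21)).sub
      ((hasDerivAt_const p.1 (2:ℝ)).mul hfd1)).sub
      (((((hasDerivAt_const p.1 (2:ℝ)).mul (hasDerivAt_id p.1)).mul hw1).mul hq11).mul hfd1)
      |>.deriv
  have eA10 : pd1 (fun q => -((V q)⁻¹ ^ 2 * pd2 V q)) p = _ :=
    (((hw1.pow 2).mul hq21).neg).deriv
  have eA11 : pd1 (fun q => 1 + q.1 * (V q)⁻¹ * pd1 V q - (V q)⁻¹ ^ 2 * F q * pd2 V q) p = _ :=
    (((hasDerivAt_const p.1 (1:ℝ)).add (((hasDerivAt_id p.1).mul hw1).mul hq11)).sub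
      (((hw1.pow 2).mul hfd1).mul hq21)).deriv
  have eB00 : pd2 (fun q => -(q.1 * (V q)⁻¹ * pd2 V q) - (V q)⁻¹ ^ 2 * F q * pd1 V q) p = _ :=
    (((((hasDerivAt_const p.2 p.1).mul hw2).mul hq22).neg).sub
      (((hw2.pow 2).mul hfd2).mul hq12)).deriv
  have eB01 : pd2 (fun q => -(2 * q.1 * (V q)⁻¹ * pd2 V q * F q) + q.1 ^ 2 * pd1 V q
      - (V q)⁻¹ ^ 2 * (F q) ^ 2 * pd1 V q) p = _ :=
    ((((((hasDerivAt_const p.2 (2 * p.1)).mul hw2).mul hq22).mul hfd2).neg).add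
      ((hasDerivAt_const p.2 (p.1 ^ 2)).mul hq12)).sub
      (((hw2.pow 2).mul (hfd2.pow 2)).mul hq12) |>.deriv
  have eB10 : pd2 (fun q => (V q)⁻¹ ^ 2 * pd1 V q) p = _ :=
    ((hw2.pow 2).mul hq12).deriv
  have eB11 : pd2 (fun q => (V q)⁻¹ ^ 2 * F q * pd1 V q + q.1 * (V q)⁻¹ * pd2 V q) p = _ :=
    ((((hw2.pow 2).mul hfd2).mul hq12).add
      (((hasDerivAt_const p.2 p.1).mul hw2).mul hq22)).deriv
  simp only [Prod.mk.eta, Pi.inv_apply, Pi.mul_apply, Pi.pow_apply, Pi.add_apply, Pi.sub_apply, Pi.neg_apply, id_eq] at eA00 eA01 eA10 eA11 eB00 eB01 eB10 eB11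
  ext i j
  fin_cases i <;> fin_cases j <;>
    simp only [Matrix.add_apply, Matrix.zero_apply, mpd1, mpd2, Matrix.of_apply,
      Fin.zero_eta, Fin.mk_one] <;>
    simp only [gA_e00, gA_e01, gA_e10, gA_e11, gB_e00, gB_e01, gB_e10, gB_e11] <;>
    simp only [eA00, eA01, eA10, eA11, eB00, eB01, eB10, eB11] <;>
    simp only [hF1 p hp, hF2 p hp, hsymm, h22] <;>
    field_simp <;> ring

lemma L_posdef (hρpos : 0 < p.1) (hvpos : 0 < V p) : (gPhi V F p).PosDef := by
  rw [Matrix.posDef_iff_dotProduct_mulVec]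
  constructor
  · ext i j
    fin_cases i <;> fin_cases j <;>
      simp [gPhi, Matrix.conjTranspose_apply]
  · intro x hx
    obtain ⟨i, hi⟩ := Function.ne_iff.mp hx
    have key : star x ⬝ᵥ gPhi V F p *ᵥ x
        = p.1⁻¹ * ((V p)⁻¹ * (x 0 + F p * x 1) ^ 2 + p.1 ^ 2 * V p * (x 1) ^ 2) := by
      simp [gPhi, dotProduct, Matrix.mulVec, Fin.sum_univ_two, Matrix.smul_apply]
      field_simp
      ring
    rw [key]
    have h1 : 0 < p.1⁻¹ := inv_pos.mpr hρpos
    have h2 : 0 < (V p)⁻¹ := inv_pos.mpr hvpos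
    have h3 : (0:ℝ) < p.1 ^ 2 * V p := by positivity
    refine mul_pos h1 ?_
    rcases eq_or_ne (x 1) 0 with h | h
    · have hx0 : x 0 ≠ 0 := by
        fin_cases i
        · simpa using hi
        · exact absurd h (by simpa using hi)
      have hne : x 0 + F p * x 1 ≠ 0 := by rw [h]; simpa using hx0
      have hpos := mul_pos h2 (sq_pos_of_ne_zero hne)
      nlinarith [mul_nonneg h3.le (sq_nonneg (x 1))]
    · have hpos := mul_pos h3 (sq_pos_of_ne_zero h)
      nlinarith [mul_nonneg h2.le (sq_nonneg (x 0 + F p * x 1))]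

lemma L_det (hρ : p.1 ≠ 0) (hv : V p ≠ 0) : (gPhi V F p).det = 1 := by
  simp [gPhi, Matrix.det_fin_two_of]
  field_simp
  ring

set_option maxHeartbeats 4000000 in
lemma L_aug (hUopen : IsOpen U) (hUH : ∀ q ∈ U, (0:ℝ) < q.1)
    (hV : ContDiffOn ℝ (⊤ : ℕ∞) V U) (hVpos : ∀ q ∈ U, 0 < V q)
    (hF : ContDiffOn ℝ (⊤ : ℕ∞) F U)
    (hF1 : ∀ q ∈ U, pd1 F q = -(q.1 * pd2 V q))
    (hF2 : ∀ q ∈ U, pd2 F q = q.1 * pd1 V q) :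
    IsAugmentationOn (gPhi V F) (fun p => (1 / 2) * Real.log (V p)) U := by
  refine ⟨contDiffOn_const.mul (hV.log fun q hq => (hVpos q hq).ne'), fun p hp => ?_⟩
  have hρ : p.1 ≠ 0 := (hUH p hp).ne'
  have hv : V p ≠ 0 := (hVpos p hp).ne'
  have hv1 := slice1_hasDerivAt hUopen hV hp
  have hv2 := slice2_hasDerivAt hUopen hV hp
  have hUm : Umat (gPhi V F) p = 1 + gA V F p := by
    unfold Umat; rw [L_A hUopen hUH hV hVpos hF hF1 hp]
  have hVm : Vmat (gPhi V F) p = gB V F p := by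
    unfold Vmat; rw [L_B hUopen hUH hV hVpos hF hF2 hp]
  have hν1 : pd1 (fun q => (1 / 2 : ℝ) * Real.log (V q)) p = _ :=
    ((hv1.log hv).const_mul (1 / 2 : ℝ)).deriv
  have hν2 : pd2 (fun q => (1 / 2 : ℝ) * Real.log (V q)) p = _ :=
    ((hv2.log hv).const_mul (1 / 2 : ℝ)).deriv
  simp only [Prod.mk.eta] at hν1 hν2
  constructor
  · rw [hν2, hUm, hVm]
    simp [Matrix.trace, Matrix.diag, Matrix.mul_apply, Fin.sum_univ_two, Matrix.add_apply,
      Matrix.one_apply, gA, gB]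
    field_simp
    ring
  · rw [hν1, hUm, hVm]
    simp [Matrix.trace, Matrix.diag, Matrix.mul_apply, Fin.sum_univ_two, Matrix.add_apply,
      Matrix.sub_apply, Matrix.one_apply, gA, gB]
    field_simp
    ring

end GHmain


/-- **Gibbons–Hawking ansatz.** If `V > 0` is a smooth axisymmetric harmonic
function on an open set `U ⊆ ℍ°` and `F` is smooth with `F_ρ = −ρV_z`, `F_z = ρV_ρ`, then
`Φ := ρ⁻¹[[V⁻¹, V⁻¹F],[V⁻¹F, ρ²V + V⁻¹F²]]` is symmetric positive definite of determinant
`1`, satisfies the axisymmetric harmonic-map equation, and `ν := ½ log V` is an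
augmentation for it. -/
theorem stmt5 (U : Set (ℝ × ℝ)) (hUopen : IsOpen U) (hUH : U ⊆ Hplane)
    (V F : ℝ × ℝ → ℝ)
    (hV : ContDiffOn ℝ (⊤ : ℕ∞) V U) (hVpos : ∀ p ∈ U, 0 < V p)
    (hVharm : ∀ p ∈ U, pd1 (pd1 V) p + p.1⁻¹ * pd1 V p + pd2 (pd2 V) p = 0)
    (hF : ContDiffOn ℝ (⊤ : ℕ∞) F U)
    (hF1 : ∀ p ∈ U, pd1 F p = -(p.1 * pd2 V p))
    (hF2 : ∀ p ∈ U, pd2 F p = p.1 * pd1 V p) :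
    (∀ p ∈ U,
      (p.1⁻¹ • !![(V p)⁻¹, (V p)⁻¹ * F p;
          (V p)⁻¹ * F p, p.1 ^ 2 * V p + (V p)⁻¹ * (F p) ^ 2] : Mat2).PosDef ∧
      (p.1⁻¹ • !![(V p)⁻¹, (V p)⁻¹ * F p;
          (V p)⁻¹ * F p, p.1 ^ 2 * V p + (V p)⁻¹ * (F p) ^ 2] : Mat2).det = 1) ∧
    axiHarmonicOn (fun p =>
      p.1⁻¹ • !![(V p)⁻¹, (V p)⁻¹ * F p;
          (V p)⁻¹ * F p, p.1 ^ 2 * V p + (V p)⁻¹ * (F p) ^ 2]) U ∧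
    IsAugmentationOn (fun p =>
      p.1⁻¹ • !![(V p)⁻¹, (V p)⁻¹ * F p;
          (V p)⁻¹ * F p, p.1 ^ 2 * V p + (V p)⁻¹ * (F p) ^ 2])
      (fun p => (1 / 2) * Real.log (V p)) U := by
  have hUH' : ∀ q ∈ U, (0:ℝ) < q.1 := fun q hq => hUH hq
  refine ⟨fun p hp => ⟨?_, ?_⟩, ?_, ?_⟩
  · exact L_posdef (hUH' p hp) (hVpos p hp)
  · exact L_det (hUH' p hp).ne' (hVpos p hp).ne'
  · exact L_harm hUopen hUH' hV hVpos hVharm hF hF1 hF2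
  · exact L_aug hUopen hUH' hV hVpos hF hF1 hF2
end
end

section
/- Scaling behavior of the model harmonic maps: for all λ > 0 and all (ρ,z) ∈ ℍ°, (i) (φ_λ*Φ^{Ae_α})(ρ,z) = Φ^{Ae_α}(ρ,z) for every α > 0; (ii) (φ_λ*Φ^{TN⁻_α})(ρ,z) = (D_{√λ}.Φ^{TN⁻_{αλ}})(ρ,z) for every α ≥ 0; (iii) (φ_λ*Φ^{AF_β})(ρ,z) = ((U_{−β}·D_{√λ}·U_β).Φ^{AF_β})(ρ,z) for every β ∈ ℝ. -/
noncomputable section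

open Real Topology Filter Matrix MeasureTheory

/-- The AE model family `Φ^{Ae_α}`. -/
def ΦAe (α : ℝ) (p : ℝ × ℝ) : Mat2 :=
  p.1⁻¹ • !![α * rr p / 2, p.2; p.2, 2 * rr p / α]

/-- `H_α = 1 + α/(2r)`. -/
def Hfun (α : ℝ) (p : ℝ × ℝ) : ℝ := 1 + α / (2 * rr p)

/-- `A_α = αz/(2r)`. -/
def Afun (α : ℝ) (p : ℝ × ℝ) : ℝ := α * p.2 / (2 * rr p)

/-- The anti–Taub-NUT model family `Φ^{TN⁻_α}`. -/
def ΦTNm (α : ℝ) (p : ℝ × ℝ) : Mat2 :=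
  p.1⁻¹ • !![(Hfun α p)⁻¹ * (Afun α p) ^ 2 + p.1 ^ 2 * Hfun α p, (Hfun α p)⁻¹ * Afun α p;
             (Hfun α p)⁻¹ * Afun α p, (Hfun α p)⁻¹]

/-- The AF model family `Φ^{AF_β}`. -/
def ΦAF (β : ℝ) (p : ℝ × ℝ) : Mat2 :=
  p.1⁻¹ • !![p.1 ^ 2, β * p.1 ^ 2; β * p.1 ^ 2, β ^ 2 * p.1 ^ 2 + 1]

/-- `D_λ = diag(λ, λ⁻¹)`. -/
def Dm (l : ℝ) : Mat2 := !![l, 0; 0, l⁻¹]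

/-- `U_μ = [[1, μ],[0, 1]]`. -/
def UM (μ : ℝ) : Mat2 := !![1, μ; 0, 1]

lemma rr_scale (l : ℝ) (hl : 0 < l) (p : ℝ × ℝ) :
    rr (p.1 / l, p.2 / l) = rr p / l := by
  unfold rr
  rw [show ((p.1/l, p.2/l) : ℝ × ℝ).1 ^ 2 + ((p.1/l, p.2/l) : ℝ × ℝ).2 ^ 2
      = (p.1 ^ 2 + p.2 ^ 2) / l ^ 2 by simp; ring,
    Real.sqrt_div (by positivity), Real.sqrt_sq hl.le]

lemma Dm_inv (s : ℝ) (hs : s ≠ 0) : (Dm s)⁻¹ = !![s⁻¹, 0; 0, s] := by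
  apply Matrix.inv_eq_left_inv
  ext i j
  fin_cases i <;> fin_cases j <;>
    simp [Dm, Matrix.mul_apply, Fin.sum_univ_two, inv_mul_cancel₀ hs, mul_inv_cancel₀ hs]

lemma prod_inv (s β : ℝ) (hs : s ≠ 0) :
    (UM (-β) * Dm s * UM β)⁻¹ = !![s⁻¹, β * s⁻¹ - β * s; 0, s] := by
  apply Matrix.inv_eq_left_inv
  ext i j
  fin_cases i <;> fin_cases j <;>
    · simp [UM, Dm, Matrix.mul_apply, Fin.sum_univ_two]
      try field_simp
      try ring

set_option maxHeartbeats 1000000 in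
/-- Scaling behavior of the model harmonic maps: for all `λ > 0` and
`(ρ,z) ∈ ℍ°`: (i) `φ_λ*Φ^{Ae_α} = Φ^{Ae_α}` for `α > 0`;
(ii) `φ_λ*Φ^{TN⁻_α} = D_{√λ}.Φ^{TN⁻_{αλ}}` for `α ≥ 0`;
(iii) `φ_λ*Φ^{AF_β} = (U_{−β}·D_{√λ}·U_β).Φ^{AF_β}` for `β ∈ ℝ`. -/
theorem stmt8 (l : ℝ) (hl : 0 < l) :
    ∀ p ∈ Hplane,
      (∀ α : ℝ, 0 < α → ΦAe α (p.1 / l, p.2 / l) = ΦAe α p) ∧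
      (∀ α : ℝ, 0 ≤ α →
        ΦTNm α (p.1 / l, p.2 / l) = matAct (Dm (Real.sqrt l)) (ΦTNm (α * l) p)) ∧
      (∀ β : ℝ,
        ΦAF β (p.1 / l, p.2 / l) = matAct (UM (-β) * Dm (Real.sqrt l) * UM β) (ΦAF β p)) := by
  obtain ⟨s, hs0, rfl⟩ : ∃ s > 0, s ^ 2 = l := ⟨Real.sqrt l, Real.sqrt_pos.2 hl, Real.sq_sqrt hl.le⟩
  have hs : s ≠ 0 := hs0.ne'
  have hl' : (s ^ 2 : ℝ) ≠ 0 := hl.ne'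
  rintro ⟨ρ, z⟩ hp
  have hρ : (0:ℝ) < ρ := hp
  have hr : (0:ℝ) < rr (ρ, z) := Real.sqrt_pos.2 (by positivity)
  have hrr : rr (ρ / s ^ 2, z / s ^ 2) = rr (ρ, z) / s ^ 2 := rr_scale _ hl (ρ, z)
  have hsq : Real.sqrt (s ^ 2) = s := Real.sqrt_sq hs0.le
  refine ⟨?_, ?_, ?_⟩
  · intro α hα
    ext i j
    fin_cases i <;> fin_cases j <;>
      · simp [ΦAe, hrr]
        try field_simp
        try ring
  · intro α hα
    have hH : Hfun (α * s ^ 2) (ρ, z) ≠ 0 := by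
      have : (0:ℝ) < 1 + α * s ^ 2 / (2 * rr (ρ, z)) := by positivity
      simpa [Hfun] using this.ne'
    have hHs : Hfun α (ρ / s ^ 2, z / s ^ 2) = Hfun (α * s ^ 2) (ρ, z) := by
      simp only [Hfun, hrr]
      field_simp
    have hAs : Afun α (ρ / s ^ 2, z / s ^ 2) = Afun (α * s ^ 2) (ρ, z) / s ^ 2 := by
      simp only [Afun, hrr]
      field_simp
    set H := Hfun (α * s ^ 2) (ρ, z) with hHdef
    set A := Afun (α * s ^ 2) (ρ, z) with hAdef
    ext i j
    fin_cases i <;> fin_cases j <;>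
      · simp only [matAct, hsq, Dm_inv s hs]
        simp only [ΦTNm, hHs, hAs, ← hHdef, ← hAdef,
          Matrix.smul_apply, Matrix.mul_apply, Matrix.transpose_apply, Fin.sum_univ_two,
          Matrix.cons_val', Matrix.cons_val_zero, Matrix.cons_val_one, Matrix.head_cons,
          Matrix.head_fin_const, Matrix.empty_val', Matrix.cons_val_fin_one, smul_eq_mul,
            Fin.zero_eta, Fin.mk_one, Matrix.of_apply]
        field_simp
        try ring
  · intro β
    ext i j
    fin_cases i <;> fin_cases j <;>
      · simp only [matAct, hsq, prod_inv s β hs]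
        simp only [ΦAF,
          Matrix.smul_apply, Matrix.mul_apply, Matrix.transpose_apply, Fin.sum_univ_two,
          Matrix.cons_val', Matrix.cons_val_zero, Matrix.cons_val_one, Matrix.head_cons,
          Matrix.head_fin_const, Matrix.empty_val', Matrix.cons_val_fin_one, smul_eq_mul,
            Fin.zero_eta, Fin.mk_one, Matrix.of_apply]
        field_simp
        try ring
end
end

section
/- (Lemma 5.1 of the paper, in trace form.) For α ≥ 0 let H_α := 1 + α/(2r), A_α := αz/(2r), and Φ^{TN⁻_α} := ρ⁻¹[[H_α⁻¹A_α² + ρ²H_α, H_α⁻¹A_α],[H_α⁻¹A_α, H_α⁻¹]] on ℍ°. Then: (i) for all (ρ,z) ∈ ℍ°, Tr((L_{α/2}.Φ_{[v₀]})⁻¹ · Φ^{TN⁻_α}) = ρ⁻²H_α⁻¹(A_α + α/2)² + H_α + H_α⁻¹, and likewise Tr((L_{−α/2}.Φ_{[v₀]})⁻¹ · Φ^{TN⁻_α}) = ρ⁻²H_α⁻¹(A_α − α/2)² + H_α + H_α⁻¹; (ii) for every r₀ > 0 there is a constant C(r₀) > 0 such that for all α ∈ [0,2] and all (ρ,z)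 ∈ ℍ° with r > r₀: if z < ρ then Tr((L_{α/2}.Φ_{[v₀]})⁻¹ · Φ^{TN⁻_α}) ≤ C(r₀), and if z > −ρ then Tr((L_{−α/2}.Φ_{[v₀]})⁻¹ · Φ^{TN⁻_α}) ≤ C(r₀). -/
noncomputable section

open Real Topology Filter Matrix MeasureTheory

/-- `L_μ = [[1,0],[μ,1]]`. -/
def Lm (μ : ℝ) : Mat2 := !![1, 0; μ, 1]

/-- The rod model `Φ_{[v₀]} = diag(ρ, ρ⁻¹)`. -/
def Φv0 (p : ℝ × ℝ) : Mat2 := !![p.1, 0; 0, p.1⁻¹]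

lemma geom' (ρ z r : ℝ) (hρ : 0 < ρ) (hr : 0 < r) (hr2 : r^2 = ρ^2 + z^2)
    (hz : z < ρ) : (z + r)^2 ≤ 9 * ρ^2 := by
  have hzr : 0 ≤ z + r := by nlinarith [sq_nonneg (z + r)]
  rcases le_or_gt z 0 with h | h
  · nlinarith
  · have h2 : r ≤ 2 * ρ := by nlinarith
    nlinarith

lemma master' (r₀ ρ z r α : ℝ) (hr0 : 0 < r₀) (hρ : 0 < ρ) (hr : r₀ < r)
    (hr2 : r^2 = ρ^2 + z^2) (hα0 : 0 ≤ α) (hα2 : α ≤ 2) (hz : z < ρ) :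
    (ρ^2)⁻¹ * (1 + α/(2*r))⁻¹ * (α*z/(2*r) + α/2)^2 + (1 + α/(2*r)) + (1 + α/(2*r))⁻¹
      ≤ 9/r₀^2 + (1 + 1/r₀) + 1 := by
  have hrpos : 0 < r := hr0.trans hr
  have hH1 : 1 ≤ 1 + α/(2*r) := by
    have : 0 ≤ α/(2*r) := by positivity
    linarith
  have hHpos : 0 < 1 + α/(2*r) := lt_of_lt_of_le one_pos hH1
  have hHinv : (1 + α/(2*r))⁻¹ ≤ 1 := by
    rw [inv_le_one_iff₀]; right; exact hH1
  have hHle : 1 + α/(2*r) ≤ 1 + 1/r₀ := by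
    have : α/(2*r) ≤ 1/r₀ := by
      rw [div_le_div_iff₀ (by positivity) hr0]
      nlinarith
    linarith
  have hA : α*z/(2*r) + α/2 = α*(z+r)/(2*r) := by field_simp
  rw [hA]
  have hgeom := geom' ρ z r hρ hrpos hr2 hz
  have hα4 : α^2 ≤ 4 := by nlinarith
  have hnum : α^2*(z+r)^2 ≤ 36*ρ^2 := by nlinarith [sq_nonneg (z+r), sq_nonneg α]
  have key : (α*(z+r)/(2*r))^2 ≤ 9*ρ^2/r^2 := by
    rw [div_pow, div_le_div_iff₀ (by positivity) (by positivity), mul_pow]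
    nlinarith [mul_le_mul_of_nonneg_right hnum (sq_nonneg r)]
  have ha : (ρ^2)⁻¹ * (1 + α/(2*r))⁻¹ * (α*(z+r)/(2*r))^2 ≤ (ρ^2)⁻¹ * 1 * (9*ρ^2/r^2) := by
    gcongr
  have hb : (ρ^2)⁻¹ * 1 * (9*ρ^2/r^2) = 9/r^2 := by field_simp
  have hc : 9/r^2 ≤ 9/r₀^2 := by gcongr
  linarith [ha, hb ▸ ha]

lemma Lm_inv' (μ : ℝ) : (Lm μ)⁻¹ = !![1, 0; -μ, 1] := by
  apply Matrix.inv_eq_right_inv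
  simp [Lm, Matrix.mul_fin_two, Matrix.one_fin_two]

lemma matAct_eq' (μ : ℝ) (p : ℝ × ℝ) :
    matAct (Lm μ) (Φv0 p) = !![p.1 + μ^2 * p.1⁻¹, -(μ * p.1⁻¹); -(μ * p.1⁻¹), p.1⁻¹] := by
  rw [matAct, Lm_inv', Φv0]
  ext i j
  fin_cases i <;> fin_cases j <;>
    simp [Matrix.mul_apply, Fin.sum_univ_two, Matrix.transpose, Matrix.vecHead,
      Matrix.vecTail] <;> ring

lemma matAct_inv' (μ : ℝ) (p : ℝ × ℝ) (hρ : p.1 ≠ 0) :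
    (matAct (Lm μ) (Φv0 p))⁻¹ = !![p.1⁻¹, μ * p.1⁻¹; μ * p.1⁻¹, p.1 + μ^2 * p.1⁻¹] := by
  rw [matAct_eq']
  apply Matrix.inv_eq_right_inv
  ext i j
  fin_cases i <;> fin_cases j <;>
    simp [Matrix.mul_fin_two, Matrix.one_fin_two] <;> field_simp <;> ring

lemma trace_formula' (μ : ℝ) (α : ℝ) (p : ℝ × ℝ) (hρ : p.1 ≠ 0) (hH : Hfun α p ≠ 0) :
    ((matAct (Lm μ) (Φv0 p))⁻¹ * ΦTNm α p).trace =
    (p.1 ^ 2)⁻¹ * (Hfun α p)⁻¹ * (Afun α p + μ) ^ 2 + Hfun α p + (Hfun α p)⁻¹ := by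
  rw [ΦTNm, matAct_inv' μ p hρ, Matrix.mul_smul, Matrix.trace_smul, Matrix.mul_fin_two,
    Matrix.trace_fin_two_of]
  field_simp
  ring_nf
  field_simp
  ring

lemma basic_facts (α : ℝ) (hα : 0 ≤ α) (p : ℝ × ℝ) (hp : 0 < p.1) :
    0 < rr p ∧ 1 ≤ Hfun α p := by
  have h1 : 0 < rr p := Real.sqrt_pos.mpr (by nlinarith [sq_nonneg p.2])
  refine ⟨h1, ?_⟩
  have : 0 ≤ α / (2 * rr p) := by positivity
  unfold Hfun; linarith

/-- **Lemma 5.1, trace form.** (i) the trace identities for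
`Tr((L_{±α/2}.Φ_{[v₀]})⁻¹ Φ^{TN⁻_α})`; (ii) for every `r₀ > 0` there is `C(r₀) > 0`
bounding these traces uniformly for `α ∈ [0,2]`, `r > r₀` on the respective sectors
`z < ρ` (θ > π/4) and `z > −ρ` (θ < 3π/4). -/
theorem stmt10 :
    (∀ α : ℝ, 0 ≤ α → ∀ p ∈ Hplane,
      ((matAct (Lm (α / 2)) (Φv0 p))⁻¹ * ΦTNm α p).trace =
        (p.1 ^ 2)⁻¹ * (Hfun α p)⁻¹ * (Afun α p + α / 2) ^ 2 + Hfun α p + (Hfun α p)⁻¹ ∧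
      ((matAct (Lm (-(α / 2))) (Φv0 p))⁻¹ * ΦTNm α p).trace =
        (p.1 ^ 2)⁻¹ * (Hfun α p)⁻¹ * (Afun α p - α / 2) ^ 2 + Hfun α p + (Hfun α p)⁻¹) ∧
    (∀ r₀ : ℝ, 0 < r₀ → ∃ C : ℝ, 0 < C ∧
      ∀ α : ℝ, 0 ≤ α → α ≤ 2 → ∀ p ∈ Hplane, r₀ < rr p →
        (p.2 < p.1 → ((matAct (Lm (α / 2)) (Φv0 p))⁻¹ * ΦTNm α p).trace ≤ C) ∧
        (-p.1 < p.2 → ((matAct (Lm (-(α / 2))) (Φv0 p))⁻¹ * ΦTNm α p).trace ≤ C)) := by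
  constructor
  · intro α hα p hp
    have hρ : 0 < p.1 := hp
    obtain ⟨hrpos, hH1⟩ := basic_facts α hα p hρ
    have hH : Hfun α p ≠ 0 := by linarith
    refine ⟨trace_formula' (α/2) α p hρ.ne' hH, ?_⟩
    rw [trace_formula' (-(α/2)) α p hρ.ne' hH]
    ring
  · intro r₀ hr0
    refine ⟨9/r₀^2 + (1 + 1/r₀) + 1, by positivity, ?_⟩
    intro α hα0 hα2 p hp hrlt
    have hρ : 0 < p.1 := hp
    obtain ⟨hrpos, hH1⟩ := basic_facts α hα0 p hρ
    have hH : Hfun α p ≠ 0 := by linarith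
    have hr2 : (rr p)^2 = p.1^2 + p.2^2 := Real.sq_sqrt (by positivity)
    constructor
    · intro hz
      rw [trace_formula' (α/2) α p hρ.ne' hH]
      simp only [Hfun, Afun]
      exact master' r₀ p.1 p.2 (rr p) α hr0 hρ hrlt hr2 hα0 hα2 hz
    · intro hz
      rw [trace_formula' (-(α/2)) α p hρ.ne' hH]
      simp only [Hfun, Afun]
      have heq : (α * p.2 / (2 * rr p) + -(α/2))^2 = (α * (-p.2) / (2 * rr p) + α/2)^2 := by
        ring
      rw [heq]
      exact master' r₀ p.1 (-p.2) (rr p) α hr0 hρ hrlt (by rw [hr2]; ring) hα0 hα2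
        (by linarith)
end
end

section
/- (Lemma 5.3 of the paper, in trace form.) For α > 0 let H_α := 1 + α/(2r), A₁ := z/(2r), and Υ_α := ρ⁻¹[[αH_α⁻¹A₁² + ρ²α⁻¹H_α, αH_α⁻¹A₁],[αH_α⁻¹A₁, αH_α⁻¹]] on ℍ°. Then: (i) for all (ρ,z) ∈ ℍ°, Tr((L_{1/2}.Φ_{[v₀]})⁻¹ · Υ_α) = ρ⁻²αH_α⁻¹(A₁ + 1/2)² + α⁻¹H_α + αH_α⁻¹, and likewise with L_{−1/2} and (A₁ − 1/2)²; (ii) for every r₀ ∈ (0,1) there is a constant C(r₀) > 0 such that for all α ≥ 1/4 and all (ρ,z) ∈ ℍ° with r₀ < r < 1/r₀: if z < ρ then Tr((L_{1/2}.Φ_{[v₀]})⁻¹ · Υ_α) ≤ C(r₀), and if z > −ρ then Tr((L_{−1/2}.Φ_{[v₀]})⁻¹ · Υ_α) ≤ C(r₀). -/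
noncomputable section

open Real Topology Filter Matrix MeasureTheory

/-- `A₁ = z/(2r)`. -/
def A1 (p : ℝ × ℝ) : ℝ := p.2 / (2 * rr p)

/-- The rescaled anti–Taub-NUT maps `Υ_α`. -/
def Υm (α : ℝ) (p : ℝ × ℝ) : Mat2 :=
  p.1⁻¹ • !![α * (Hfun α p)⁻¹ * (A1 p) ^ 2 + p.1 ^ 2 * α⁻¹ * Hfun α p,
               α * (Hfun α p)⁻¹ * A1 p;
             α * (Hfun α p)⁻¹ * A1 p, α * (Hfun α p)⁻¹]

lemma key53 (r₀ ρ z r α : ℝ) (hρ : 0 < ρ) (hr : 0 < r) (hr2 : r^2 = ρ^2 + z^2)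
    (hα : 1/4 ≤ α) (hr₀ : 0 < r₀) (h1 : r₀ < r) (h2 : r < 1/r₀) (hz : z < ρ) :
    (ρ^2)⁻¹ * α * (1 + α/(2*r))⁻¹ * (z/(2*r) + 1/2)^2 + α⁻¹ * (1 + α/(2*r)) +
      α * (1 + α/(2*r))⁻¹ ≤ 4/r₀ + 4 + 1/(2*r₀) + 2/r₀ := by
  have hα0 : 0 < α := lt_of_lt_of_le (by norm_num) hα
  have hH : 0 < 1 + α/(2*r) := by positivity
  have hb3 : α * (1 + α/(2*r))⁻¹ ≤ 2*r := by
    rw [mul_inv_le_iff₀ hH]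
    have e : (1 + α/(2*r)) * (2*r) = 2*r + α := by field_simp
    linarith
  have hb2 : α⁻¹ * (1 + α/(2*r)) ≤ 4 + 1/(2*r₀) := by
    have h1' : α⁻¹ ≤ 4 := by
      rw [show (4:ℝ) = ((1:ℝ)/4)⁻¹ by norm_num]
      exact inv_anti₀ (by norm_num) hα
    have h2' : α⁻¹ * (α/(2*r)) = 1/(2*r) := by field_simp
    have h3' : 1/(2*r) ≤ 1/(2*r₀) := by
      apply one_div_le_one_div_of_le <;> linarith
    calc α⁻¹ * (1 + α/(2*r)) = α⁻¹ + 1/(2*r) := by rw [mul_add, mul_one, h2']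
    _ ≤ 4 + 1/(2*r₀) := by linarith
  have hzr : z < r := by nlinarith
  have hzr' : -r < z := by nlinarith
  have h97 : 9*z ≤ 7*r := by nlinarith [sq_nonneg z, sq_nonneg (z - ρ)]
  have h8 : (z + r)^2 ≤ 8*ρ^2 := by
    nlinarith [mul_nonneg (by linarith : (0:ℝ) ≤ r + z) (by linarith : (0:ℝ) ≤ 7*r - 9*z)]
  have hsq : (ρ^2)⁻¹ * (z/(2*r) + 1/2)^2 ≤ 2/r^2 := by
    have hA : (z/(2*r) + 1/2)^2 = (z+r)^2/(4*r^2) := by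
      field_simp; ring
    rw [hA, inv_mul_eq_div, div_div, div_le_div_iff₀ (by positivity) (by positivity)]
    nlinarith
  have hterm1 : (ρ^2)⁻¹ * α * (1 + α/(2*r))⁻¹ * (z/(2*r) + 1/2)^2 ≤ 4/r₀ := by
    have e : (ρ^2)⁻¹ * α * (1 + α/(2*r))⁻¹ * (z/(2*r) + 1/2)^2
        = (α * (1 + α/(2*r))⁻¹) * ((ρ^2)⁻¹ * (z/(2*r) + 1/2)^2) := by ring
    rw [e]
    calc (α * (1 + α/(2*r))⁻¹) * ((ρ^2)⁻¹ * (z/(2*r) + 1/2)^2)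
        ≤ (2*r) * (2/r^2) := by
          apply mul_le_mul hb3 hsq (by positivity) (by positivity)
    _ = 4/r := by field_simp; ring
    _ ≤ 4/r₀ := div_le_div_of_nonneg_left (by norm_num) hr₀ h1.le
  have hlast : α * (1 + α/(2*r))⁻¹ ≤ 2/r₀ :=
    hb3.trans (by rw [le_div_iff₀ hr₀]; have := (lt_div_iff₀ hr₀).mp h2; nlinarith)
  linarith

lemma traceId53 (μ α : ℝ) (hα : 0 < α) (p : ℝ × ℝ) (hp : p ∈ Hplane) :
    ((matAct (Lm μ) (Φv0 p))⁻¹ * Υm α p).trace =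
      (p.1 ^ 2)⁻¹ * α * (Hfun α p)⁻¹ * (A1 p + μ) ^ 2 + α⁻¹ * Hfun α p +
        α * (Hfun α p)⁻¹ := by
  have hρ : (0:ℝ) < p.1 := hp
  have hρ' : p.1 ≠ 0 := hρ.ne'
  have hr : 0 < rr p := Real.sqrt_pos.mpr (by positivity)
  have hH : 0 < Hfun α p := by unfold Hfun; positivity
  have hH' : Hfun α p ≠ 0 := hH.ne'
  have hL : (Lm μ)⁻¹ = Lm (-μ) := by
    apply Matrix.inv_eq_right_inv
    rw [show Lm μ = !![1,0;μ,1] from rfl, show Lm (-μ) = !![1,0;-μ,1] from rfl,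
      Matrix.mul_fin_two, Matrix.one_fin_two]
    norm_num
  have hM : matAct (Lm μ) (Φv0 p) = !![p.1 + μ^2 * p.1⁻¹, -(μ * p.1⁻¹); -(μ * p.1⁻¹), p.1⁻¹] := by
    rw [matAct, hL]
    ext i j
    fin_cases i <;> fin_cases j <;>
      simp [Lm, Φv0, Matrix.mul_apply, Fin.sum_univ_two, Matrix.transpose_apply,
        Matrix.vecHead, Matrix.vecTail] <;> ring
  have hMi : (matAct (Lm μ) (Φv0 p))⁻¹ =
      !![p.1⁻¹, μ * p.1⁻¹; μ * p.1⁻¹, p.1 + μ^2 * p.1⁻¹] := by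
    rw [hM]
    apply Matrix.inv_eq_right_inv
    ext i j
    fin_cases i <;> fin_cases j <;>
      simp [Matrix.mul_apply, Fin.sum_univ_two] <;> field_simp <;> ring
  rw [hMi]
  rw [Matrix.trace_fin_two]
  simp only [Υm, Matrix.mul_apply, Fin.sum_univ_two, Matrix.smul_apply, Matrix.cons_val_zero,
    Matrix.cons_val_one, Matrix.head_cons, Matrix.head_fin_const, smul_eq_mul,
    Matrix.of_apply, Matrix.cons_val', Matrix.empty_val']
  field_simp
  ring

/-- **Lemma 5.3, trace form.** (i) trace identities for
`Tr((L_{±1/2}.Φ_{[v₀]})⁻¹ Υ_α)`; (ii) for every `r₀ ∈ (0,1)` there is `C(r₀) > 0`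
bounding these traces uniformly for `α ≥ 1/4` and `r₀ < r < 1/r₀`, on the respective
sectors `z < ρ` and `z > −ρ`. -/
theorem stmt12 :
    (∀ α : ℝ, 0 < α → ∀ p ∈ Hplane,
      ((matAct (Lm (1 / 2)) (Φv0 p))⁻¹ * Υm α p).trace =
        (p.1 ^ 2)⁻¹ * α * (Hfun α p)⁻¹ * (A1 p + 1 / 2) ^ 2 +
          α⁻¹ * Hfun α p + α * (Hfun α p)⁻¹ ∧
      ((matAct (Lm (-(1 / 2))) (Φv0 p))⁻¹ * Υm α p).trace =
        (p.1 ^ 2)⁻¹ * α * (Hfun α p)⁻¹ * (A1 p - 1 / 2) ^ 2 +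
          α⁻¹ * Hfun α p + α * (Hfun α p)⁻¹) ∧
    (∀ r₀ : ℝ, 0 < r₀ → r₀ < 1 → ∃ C : ℝ, 0 < C ∧
      ∀ α : ℝ, 1 / 4 ≤ α → ∀ p ∈ Hplane, r₀ < rr p → rr p < 1 / r₀ →
        (p.2 < p.1 → ((matAct (Lm (1 / 2)) (Φv0 p))⁻¹ * Υm α p).trace ≤ C) ∧
        (-p.1 < p.2 → ((matAct (Lm (-(1 / 2))) (Φv0 p))⁻¹ * Υm α p).trace ≤ C)) := by
  constructor
  · intro α hα p hp
    constructor
    · exact traceId53 (1/2) α hα p hp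
    · rw [traceId53 (-(1/2)) α hα p hp]; ring
  · intro r₀ hr₀ hr₀1
    refine ⟨4/r₀ + 4 + 1/(2*r₀) + 2/r₀, by positivity, ?_⟩
    intro α hα p hp h1 h2
    have hα0 : (0:ℝ) < α := lt_of_lt_of_le (by norm_num) hα
    have hρ : (0:ℝ) < p.1 := hp
    have hr : 0 < rr p := lt_trans hr₀ h1
    have hr2 : rr p ^ 2 = p.1 ^ 2 + p.2 ^ 2 := Real.sq_sqrt (by positivity)
    constructor
    · intro hz
      rw [traceId53 (1/2) α hα0 p hp]
      unfold Hfun A1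
      exact key53 r₀ p.1 p.2 (rr p) α hρ hr hr2 hα hr₀ h1 h2 hz
    · intro hz
      rw [traceId53 (-(1/2)) α hα0 p hp]
      have hk := key53 r₀ p.1 (-p.2) (rr p) α hρ hr (by rw [hr2]; ring) hα hr₀ h1 h2
        (by linarith)
      have e : ((-p.2)/(2*rr p) + 1/2)^2 = (p.2/(2*rr p) + -(1/2))^2 := by ring
      rw [e] at hk
      unfold Hfun A1
      exact hk
end
end

section
/- (Lemma 5.8 of the paper.) Let c > 0 and N > 1. There exists a constant C > 0 depending only on c and N such that: for every r > 0 and every smooth function f : ℝ³ → ℝ whose support is contained in the annulus {y ∈ ℝ³ : r ≤ |y| ≤ Nr} and which satisfies |f(y)| ≤ c·r⁻² for all y, the Newtonian potential 𝒩_f(x) := ∫_{ℝ³} f(y)/|x − y| dy satisfies |𝒩_f(x)| ≤ C·r/(r + |x|) for all x ∈ ℝ³. In particular, if r ≤ 1 then (1 + |x|)·|𝒩_f(x)| ≤ 2C for all x ∈ ℝ³. -/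
noncomputable section

open Real Filter MeasureTheory

open Metric Set ENNReal

local notation "E3" => EuclideanSpace ℝ (Fin 3)

lemma polar3 (F : ℝ → ℝ≥0∞) (hF : Measurable F) :
    ∫⁻ y : E3, F ‖y‖ =
      3 * volume (ball (0 : E3) 1) * ∫⁻ t in Ioi (0:ℝ), ENNReal.ofReal (t ^ 2) * F t := by
  have hdim : Module.finrank ℝ E3 = 3 := finrank_euclideanSpace_fin
  have h1 : ∫⁻ y : E3, F ‖y‖ =
      ∫⁻ y : ({(0:E3)}ᶜ : Set E3), F ‖(y : E3)‖ ∂((volume : Measure E3).comap (↑)) := by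
    have := lintegral_subtype_comap (μ := (volume : Measure E3))
      (measurableSet_singleton (0:E3)).compl (fun y => F ‖y‖)
    rw [MeasureTheory.restrict_compl_singleton] at this
    exact this.symm
  have hmeas : Measurable fun p : (sphere (0:E3) 1 × Ioi (0:ℝ)) => F p.2.1 :=
    hF.comp (measurable_subtype_coe.comp measurable_snd)
  have h2 := (Measure.measurePreserving_homeomorphUnitSphereProd
      (volume : Measure E3)).lintegral_comp hmeas
  have h2' : ∫⁻ y : ({(0:E3)}ᶜ : Set E3), F ‖(y : E3)‖ ∂((volume : Measure E3).comap (↑)) =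
      ∫⁻ p : (sphere (0:E3) 1 × Ioi (0:ℝ)), F p.2.1
        ∂((volume : Measure E3).toSphere.prod
          (Measure.volumeIoiPow (Module.finrank ℝ E3 - 1))) := by
    rw [← h2]; simp
  have h3 : ∫⁻ p : (sphere (0:E3) 1 × Ioi (0:ℝ)), F p.2.1
        ∂((volume : Measure E3).toSphere.prod
          (Measure.volumeIoiPow (Module.finrank ℝ E3 - 1))) =
      (volume : Measure E3).toSphere univ *
        ∫⁻ t : Ioi (0:ℝ), F t.1 ∂(Measure.volumeIoiPow (Module.finrank ℝ E3 - 1)) := by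
    rw [MeasureTheory.lintegral_prod _ hmeas.aemeasurable]
    simp [lintegral_const, mul_comm]
  have h4 : ∫⁻ t : Ioi (0:ℝ), F t.1 ∂(Measure.volumeIoiPow (Module.finrank ℝ E3 - 1)) =
      ∫⁻ t in Ioi (0:ℝ), ENNReal.ofReal (t ^ 2) * F t := by
    rw [hdim]
    rw [Measure.volumeIoiPow,
      lintegral_withDensity_eq_lintegral_mul _
        ((measurable_subtype_coe.pow_const _).ennreal_ofReal)
        (show Measurable fun t : Ioi (0:ℝ) => F t.1 by exact hF.comp measurable_subtype_coe)]
    have := lintegral_subtype_comap (μ := (volume : Measure ℝ))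
      (measurableSet_Ioi (a := (0:ℝ))) (fun t => ENNReal.ofReal (t ^ 2) * F t)
    simp only [Pi.mul_apply] at this ⊢
    norm_num at this ⊢
    exact this
  rw [h1, h2', h3, h4, Measure.toSphere_apply_univ, hdim]
  norm_num

def Fk (R : ℝ) : ℝ → ℝ≥0∞ := (Iio R).indicator fun t => ENNReal.ofReal t⁻¹

lemma Fk_meas (R : ℝ) : Measurable (Fk R) :=
  (ENNReal.measurable_ofReal.comp measurable_inv).indicator measurableSet_Iio

lemma inner_int (R : ℝ) (hR : 0 < R) :
    ∫⁻ t in Ioi (0:ℝ), ENNReal.ofReal (t ^ 2) * Fk R t = ENNReal.ofReal (R ^ 2 / 2) := by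
  have hcong : ∀ᵐ t ∂(volume : Measure ℝ), t ∈ Ioi (0:ℝ) →
      ENNReal.ofReal (t ^ 2) * Fk R t = (Iio R).indicator (fun t => ENNReal.ofReal t) t := by
    refine ae_of_all _ fun t ht => ?_
    by_cases h : t < R
    · rw [Fk, Set.indicator_of_mem (Set.mem_Iio.2 h), Set.indicator_of_mem (Set.mem_Iio.2 h),
        ← ENNReal.ofReal_mul (sq_nonneg t)]
      congr 1
      field_simp [ht.out.ne']
    · rw [Fk, Set.indicator_of_notMem (by simpa using h), Set.indicator_of_notMem (by simpa using h), mul_zero]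
  rw [setLIntegral_congr_fun_ae measurableSet_Ioi hcong, lintegral_indicator measurableSet_Iio,
    Measure.restrict_restrict measurableSet_Iio, Set.Iio_inter_Ioi]
  have hint : IntegrableOn (fun t : ℝ => t) (Ioo 0 R) volume :=
    (_root_.intervalIntegral.intervalIntegrable_id (a := 0) (b := R) (μ := volume)).1.mono_set Set.Ioo_subset_Ioc_self
  rw [← ofReal_integral_eq_lintegral_ofReal hint
    ((ae_restrict_mem measurableSet_Ioo).mono fun t ht => ht.1.le)]
  congr 1
  rw [Measure.restrict_congr_set Ioo_ae_eq_Ioc, ← intervalIntegral.integral_of_le hR.le]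
  open intervalIntegral in rw [integral_id]
  ring

lemma ball_kernel (R : ℝ) (hR : 0 < R) (x : E3) :
    ∫⁻ y : E3, Fk R ‖x - y‖ = 3 * volume (ball (0 : E3) 1) * ENNReal.ofReal (R ^ 2 / 2) := by
  have h0 : ∫⁻ y : E3, Fk R ‖x - y‖ = ∫⁻ y : E3, Fk R ‖y - x‖ := by
    refine lintegral_congr fun y => by rw [norm_sub_rev]
  have h1 : ∫⁻ y : E3, Fk R ‖y - x‖ = ∫⁻ y : E3, Fk R ‖y‖ :=
    (measurePreserving_sub_right (volume : Measure E3) x).lintegral_comp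
      ((Fk_meas R).comp measurable_norm)
  rw [h0, h1, polar3 _ (Fk_meas R), inner_int R hR]


set_option maxHeartbeats 1000000 in
/-- **Lemma 5.8.** Let `c > 0` and `N > 1`. There is a constant `C > 0`
depending only on `c` and `N` such that for every `r > 0` and every smooth
`f : ℝ³ → ℝ` supported in the annulus `{r ≤ |y| ≤ Nr}` with `|f| ≤ c·r⁻²`, the Newtonian
potential `𝒩_f(x) = ∫ f(y)/|x − y| dy` satisfies `|𝒩_f(x)| ≤ C·r/(r + |x|)` for all `x`;
in particular, if `r ≤ 1` then `(1 + |x|)·|𝒩_f(x)| ≤ 2C`. -/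
theorem stmt13 (c N : ℝ) (hc : 0 < c) (hN : 1 < N) :
    ∃ C : ℝ, 0 < C ∧
      ∀ r : ℝ, 0 < r → ∀ f : EuclideanSpace ℝ (Fin 3) → ℝ,
        ContDiff ℝ (⊤ : ℕ∞) f →
        Function.support f ⊆ {y : EuclideanSpace ℝ (Fin 3) | r ≤ ‖y‖ ∧ ‖y‖ ≤ N * r} →
        (∀ y, |f y| ≤ c / r ^ 2) →
        ∀ x : EuclideanSpace ℝ (Fin 3),
          |∫ y, f y / ‖x - y‖| ≤ C * r / (r + ‖x‖) ∧
          (r ≤ 1 → (1 + ‖x‖) * |∫ y, f y / ‖x - y‖| ≤ 2 * C) := by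
  classical
  have hdim : Module.finrank ℝ E3 = 3 := finrank_euclideanSpace_fin
  set V : ℝ := (volume (ball (0 : E3) 1)).toReal with hVdef
  have hV1top : volume (ball (0 : E3) 1) ≠ ⊤ := measure_ball_lt_top.ne
  have hVpos : 0 < V :=
    ENNReal.toReal_pos (measure_ball_pos volume (0 : E3) one_pos).ne' hV1top
  have hN0 : (0:ℝ) < N := by linarith
  set C : ℝ := 24*c*V*N^2*(1+2*N) + 4*c*V*N^3 with hCdef
  have hC : 0 < C := by positivity
  refine ⟨C, hC, ?_⟩
  intro r hr f hf hsupp hbound x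
  have hxr : 0 < r + ‖x‖ := by positivity
  have hCr : 0 ≤ C * r / (r + ‖x‖) := by positivity
  have key : |∫ y, f y / ‖x - y‖| ≤ C * r / (r + ‖x‖) := by
    have h1 : |∫ y, f y / ‖x - y‖| ≤
        (∫⁻ y, ENNReal.ofReal ‖f y / ‖x - y‖‖).toReal := by
      simpa [Real.norm_eq_abs] using
        norm_integral_le_lintegral_norm (μ := (volume : Measure E3))
          (fun y : E3 => f y / ‖x - y‖)
    refine h1.trans (ENNReal.toReal_le_of_le_ofReal hCr ?_)
    by_cases hcase : ‖x‖ ≤ 2*N*r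
    · -- near field
      have hpt : ∀ y : E3, ENNReal.ofReal ‖f y / ‖x - y‖‖ ≤
          ENNReal.ofReal (c / r^2) * Fk (4*N*r) ‖x - y‖ := by
        intro y
        by_cases hfy : f y = 0
        · simp only [hfy, zero_div, norm_zero, ENNReal.ofReal_zero]
          exact zero_le
        · obtain ⟨hy1, hy2⟩ := hsupp (Function.mem_support.2 hfy)
          have hxy : ‖x - y‖ < 4*N*r := by
            calc ‖x - y‖ ≤ ‖x‖ + ‖y‖ := norm_sub_le x y
            _ ≤ 2*N*r + N*r := by linarith
            _ < 4*N*r := by nlinarith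
          rw [Fk, Set.indicator_of_mem (Set.mem_Iio.2 hxy),
            ← ENNReal.ofReal_mul (by positivity)]
          apply ENNReal.ofReal_le_ofReal
          rw [Real.norm_eq_abs, abs_div, abs_norm, div_eq_mul_inv]
          exact mul_le_mul_of_nonneg_right (hbound y) (inv_nonneg.2 (norm_nonneg _))
      calc ∫⁻ y, ENNReal.ofReal ‖f y / ‖x - y‖‖
          ≤ ∫⁻ y, ENNReal.ofReal (c / r^2) * Fk (4*N*r) ‖x - y‖ := lintegral_mono hpt
        _ = ENNReal.ofReal (c / r^2) * ∫⁻ y, Fk (4*N*r) ‖x - y‖ :=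
            lintegral_const_mul' _ _ ENNReal.ofReal_ne_top
        _ = ENNReal.ofReal (c / r^2) *
            (3 * volume (ball (0:E3) 1) * ENNReal.ofReal ((4*N*r)^2/2)) := by
            rw [ball_kernel (4*N*r) (by positivity) x]
        _ = ENNReal.ofReal (c / r^2 * (3 * V * ((4*N*r)^2/2))) := by
            rw [← ENNReal.ofReal_toReal hV1top, ← hVdef,
              show (3:ℝ≥0∞) = ENNReal.ofReal (3:ℝ) by norm_num,
              ← ENNReal.ofReal_mul (by norm_num),
              ← ENNReal.ofReal_mul (by positivity),
              ← ENNReal.ofReal_mul (by positivity)]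
        _ ≤ ENNReal.ofReal (C * r / (r + ‖x‖)) := by
            apply ENNReal.ofReal_le_ofReal
            have hval : c / r^2 * (3 * V * ((4*N*r)^2/2)) = 24*c*V*N^2 := by
              field_simp
              ring
            rw [hval, le_div_iff₀ hxr]
            have hsum : r + ‖x‖ ≤ (1+2*N)*r := by nlinarith
            calc 24*c*V*N^2 * (r+‖x‖) ≤ 24*c*V*N^2*((1+2*N)*r) :=
                mul_le_mul_of_nonneg_left hsum (by positivity)
              _ ≤ C*r := by nlinarith [mul_nonneg (show (0:ℝ) ≤ 4*c*V*N^3 by positivity) hr.le]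
    · -- far field
      push_neg at hcase
      have hx0 : 0 < ‖x‖ := by nlinarith
      have hpt : ∀ y : E3, ENNReal.ofReal ‖f y / ‖x - y‖‖ ≤
          (closedBall (0:E3) (N*r)).indicator
            (fun _ => ENNReal.ofReal (c / r^2 * (2/‖x‖))) y := by
        intro y
        by_cases hfy : f y = 0
        · simp only [hfy, zero_div, norm_zero, ENNReal.ofReal_zero]
          exact zero_le
        · obtain ⟨hy1, hy2⟩ := hsupp (Function.mem_support.2 hfy)
          rw [Set.indicator_of_mem (mem_closedBall_zero_iff.2 hy2)]
          apply ENNReal.ofReal_le_ofReal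
          rw [Real.norm_eq_abs, abs_div, abs_norm]
          have hxy : ‖x‖/2 ≤ ‖x - y‖ := by
            have h := norm_sub_norm_le x y
            linarith
          calc |f y| / ‖x - y‖ ≤ (c / r^2) / (‖x‖/2) :=
              div_le_div₀ (by positivity) (hbound y) (by positivity) hxy
            _ = c / r^2 * (2/‖x‖) := by
              field_simp
      calc ∫⁻ y, ENNReal.ofReal ‖f y / ‖x - y‖‖
          ≤ ∫⁻ y, (closedBall (0:E3) (N*r)).indicator
              (fun _ => ENNReal.ofReal (c / r^2 * (2/‖x‖))) y := lintegral_mono hpt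
        _ = ENNReal.ofReal (c / r^2 * (2/‖x‖)) * volume (closedBall (0:E3) (N*r)) := by
            rw [lintegral_indicator measurableSet_closedBall, setLIntegral_const]
        _ = ENNReal.ofReal (c / r^2 * (2/‖x‖)) *
            (ENNReal.ofReal ((N*r)^3) * volume (ball (0:E3) 1)) := by
            rw [Measure.addHaar_closedBall _ _ (by positivity), hdim]
        _ = ENNReal.ofReal (c / r^2 * (2/‖x‖) * ((N*r)^3 * V)) := by
            rw [← ENNReal.ofReal_toReal hV1top, ← hVdef,
              ← ENNReal.ofReal_mul (by positivity),
              ← ENNReal.ofReal_mul (by positivity)]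
        _ ≤ ENNReal.ofReal (C * r / (r + ‖x‖)) := by
            apply ENNReal.ofReal_le_ofReal
            have hval : c / r^2 * (2/‖x‖) * ((N*r)^3 * V) = 2*c*V*N^3*r/‖x‖ := by
              field_simp
            rw [hval, div_le_div_iff₀ hx0 hxr]
            have hrx : r ≤ ‖x‖ := by nlinarith
            have h2x : r + ‖x‖ ≤ 2*‖x‖ := by linarith
            have hCge : 4*c*V*N^3 ≤ C := by
              rw [hCdef]
              nlinarith [mul_nonneg (mul_nonneg (mul_nonneg
                (show (0:ℝ) ≤ 24*c by positivity) hVpos.le) (sq_nonneg N))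
                (show (0:ℝ) ≤ 1+2*N by linarith)]
            calc 2*c*V*N^3*r*(r+‖x‖) ≤ 2*c*V*N^3*r*(2*‖x‖) :=
                mul_le_mul_of_nonneg_left h2x (by positivity)
              _ = 4*c*V*N^3*(r*‖x‖) := by ring
              _ ≤ C*(r*‖x‖) := mul_le_mul_of_nonneg_right hCge (by positivity)
              _ = C*r*‖x‖ := by ring
  refine ⟨key, fun hr1 => ?_⟩
  have h2 : (1+‖x‖) * |∫ y, f y / ‖x - y‖| ≤ (1+‖x‖) * (C*r/(r+‖x‖)) :=
    mul_le_mul_of_nonneg_left key (by positivity)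
  refine h2.trans ?_
  rw [← mul_div_assoc, div_le_iff₀ hxr]
  nlinarith [mul_nonneg (mul_nonneg hC.le (norm_nonneg x)) (by linarith : (0:ℝ) ≤ 1 - r),
    mul_pos hC hr]
end
end

section
/- (Proposition 3.10 of the paper, non-AF case, in reduced coordinates.) Let n ≥ 1 and define T_n := {(v₁,…,v_n) ∈ ℝⁿ : 0 < v₁ < π, 0 < v_j − v_{j−1} < π for 2 ≤ j ≤ n, and v_n ∉ πℤ}. Then two points v, w ∈ T_n lie in the same path component of T_n if and only if ⌈v_n/π⌉ = ⌈w_n/π⌉. Moreover, for each integer k the set {v ∈ T_n : (k−1)π < v_n < kπ} is convex, and it is nonempty exactly when 1 ≤ k ≤ n; consequently T_n has exactly n path components. -/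
noncomputable section

open Real

/-- The extension `(0, v₁, …, v_n)` of a tuple `(v₁,…,v_n)` by `v₀ = 0`. -/
def vext (n : ℕ) (v : Fin n → ℝ) : Fin (n + 1) → ℝ := Fin.cons 0 v

/-- The last coordinate `v_n` of the tuple `(v₁,…,v_n)`. -/
def vlast (n : ℕ) (v : Fin n → ℝ) : ℝ := vext n v (Fin.last n)

/-- The space `T_n` of angle lifts of rod structures of non-AF type:
`0 = v₀ < v₁ < … < v_n`, consecutive gaps in `(0,π)`, and `v_n ∉ πℤ`. -/
def Tset (n : ℕ) : Set (Fin n → ℝ) :=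
  {v | (∀ j : Fin n,
          0 < vext n v j.succ - vext n v j.castSucc ∧
          vext n v j.succ - vext n v j.castSucc < π) ∧
       ∀ k : ℤ, vlast n v ≠ (k : ℝ) * π}

lemma tele (n : ℕ) (f : Fin (n+1) → ℝ) :
    ∑ j : Fin n, (f j.succ - f j.castSucc) = f (Fin.last n) - f 0 := by
  induction n with
  | zero => simp
  | succ n ih =>
    rw [Fin.sum_univ_castSucc]
    have := ih (fun j => f j.castSucc)
    simp only [Fin.succ_castSucc] at *
    rw [this]
    simp [Fin.succ_last]

lemma vext_comb (n : ℕ) (x y : Fin n → ℝ) (a b : ℝ) (j : Fin (n+1)) :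
    vext n (a • x + b • y) j = a * vext n x j + b * vext n y j := by
  induction j using Fin.cases with
  | zero => simp [vext]
  | succ i => simp [vext, mul_comm]


lemma vlast_pos {n : ℕ} (hn : 1 ≤ n) {v : Fin n → ℝ} (hv : v ∈ Tset n) :
    0 < vlast n v := by
  have h := tele n (vext n v)
  have h0 : vext n v 0 = 0 := rfl
  rw [h0, sub_zero] at h
  rw [vlast, ← h]
  apply Finset.sum_pos (fun j _ => (hv.1 j).1)
  simpa [Finset.univ_nonempty_iff, ← Fin.pos_iff_nonempty] using Nat.lt_of_succ_le hn

lemma vlast_lt {n : ℕ} (hn : 1 ≤ n) {v : Fin n → ℝ} (hv : v ∈ Tset n) :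
    vlast n v < n * π := by
  have h := tele n (vext n v)
  have h0 : vext n v 0 = 0 := rfl
  rw [h0, sub_zero] at h
  rw [vlast, ← h]
  calc ∑ j : Fin n, (vext n v j.succ - vext n v j.castSucc)
      < ∑ _j : Fin n, π := by
        apply Finset.sum_lt_sum_of_nonempty _ (fun j _ => (hv.1 j).2)
        simpa [Finset.univ_nonempty_iff, ← Fin.pos_iff_nonempty] using Nat.lt_of_succ_le hn
    _ = n * π := by simp [mul_comm]

lemma ceil_slab {n : ℕ} (hn : 1 ≤ n) {v : Fin n → ℝ} (hv : v ∈ Tset n) :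
    ((⌈vlast n v / π⌉ : ℝ) - 1) * π < vlast n v ∧ vlast n v < (⌈vlast n v / π⌉ : ℝ) * π := by
  have hπ := pi_pos
  have h1 : vlast n v / π ≤ ⌈vlast n v / π⌉ := Int.le_ceil _
  constructor
  · calc ((⌈vlast n v / π⌉ : ℝ) - 1) * π < (vlast n v / π) * π := by
          apply mul_lt_mul_of_pos_right _ hπ
          exact sub_lt_iff_lt_add.mpr (Int.ceil_lt_add_one _)
        _ = vlast n v := div_mul_cancel₀ _ hπ.ne'
  · have hne : vlast n v / π ≠ (⌈vlast n v / π⌉ : ℝ) := by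
      intro h
      exact hv.2 ⌈vlast n v / π⌉ (by field_simp at h; linarith [h])
    have : vlast n v / π < ⌈vlast n v / π⌉ := lt_of_le_of_ne h1 hne
    calc vlast n v = (vlast n v / π) * π := (div_mul_cancel₀ _ hπ.ne').symm
      _ < (⌈vlast n v / π⌉ : ℝ) * π := mul_lt_mul_of_pos_right this hπ

/-- The slab. -/
def Sl (n : ℕ) (k : ℤ) : Set (Fin n → ℝ) :=
  {v ∈ Tset n | ((k : ℝ) - 1) * π < vlast n v ∧ vlast n v < (k : ℝ) * π}

lemma comb_mem {s t u w a b : ℝ} (ha : 0 ≤ a) (hb : 0 ≤ b) (hab : a + b = 1)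
    (h1 : s < u) (h2 : u < t) (h3 : s < w) (h4 : w < t) :
    s < a * u + b * w ∧ a * u + b * w < t := by
  have hs : a * s + b * s = s := by rw [← add_mul, hab, one_mul]
  have ht : a * t + b * t = t := by rw [← add_mul, hab, one_mul]
  rcases ha.lt_or_eq with ha' | ha'
  · constructor
    · nlinarith [mul_lt_mul_of_pos_left h1 ha', mul_le_mul_of_nonneg_left h3.le hb]
    · nlinarith [mul_lt_mul_of_pos_left h2 ha', mul_le_mul_of_nonneg_left h4.le hb]
  · have ha0 : a = 0 := ha'.symm
    have hb1 : b = 1 := by linarith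
    rw [ha0, hb1]; constructor <;> nlinarith

lemma slab_convex (n : ℕ) (k : ℤ) : Convex ℝ (Sl n k) := by
  intro x hx y hy a b ha hb hab
  have hgap : ∀ j : Fin n,
      vext n (a • x + b • y) j.succ - vext n (a • x + b • y) j.castSucc
        = a * (vext n x j.succ - vext n x j.castSucc)
          + b * (vext n y j.succ - vext n y j.castSucc) := by
    intro j; rw [vext_comb, vext_comb]; ring
  have hlast : vlast n (a • x + b • y) = a * vlast n x + b * vlast n y := by
    rw [vlast, vlast, vlast, vext_comb]
  have hb2 : ((k : ℝ) - 1) * π < vlast n (a • x + b • y) ∧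
      vlast n (a • x + b • y) < (k : ℝ) * π := by
    rw [hlast]
    exact comb_mem ha hb hab hx.2.1 hx.2.2 hy.2.1 hy.2.2
  refine ⟨⟨fun j => ?_, fun m hm => ?_⟩, hb2⟩
  · rw [hgap j]
    exact comb_mem ha hb hab (hx.1.1 j).1 (hx.1.1 j).2 (hy.1.1 j).1 (hy.1.1 j).2
  · obtain ⟨hl, hr⟩ := hb2
    rw [hm] at hl hr
    have hπ := pi_pos
    have h1 : (k : ℝ) - 1 < m := by
      have := (mul_lt_mul_iff_left₀ hπ).mp hl; exact_mod_cast this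
    have h2 : (m : ℝ) < k := by
      have := (mul_lt_mul_iff_left₀ hπ).mp hr; exact_mod_cast this
    have h1' : k - 1 < m := by exact_mod_cast h1
    have h2' : m < k := by exact_mod_cast h2
    omega

lemma mem_slab_ceil {n : ℕ} (hn : 1 ≤ n) {v : Fin n → ℝ} (hv : v ∈ Tset n) :
    v ∈ Sl n ⌈vlast n v / π⌉ := ⟨hv, ceil_slab hn hv⟩

lemma slab_ceil_eq {n : ℕ} {k : ℤ} {v : Fin n → ℝ} (hv : v ∈ Sl n k) :
    ⌈vlast n v / π⌉ = k := by
  have hπ := pi_pos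
  rw [Int.ceil_eq_iff]
  constructor
  · rw [lt_div_iff₀ hπ]; exact_mod_cast hv.2.1
  · rw [div_le_iff₀ hπ]; exact_mod_cast hv.2.2.le

lemma slab_nonempty {n : ℕ} (hn : 1 ≤ n) {k : ℤ} (hk1 : 1 ≤ k) (hk2 : k ≤ (n : ℤ)) :
    (Sl n k).Nonempty := by
  have hπ := pi_pos
  set c : ℝ := ((k : ℝ) - 1/2) * π / n with hc
  have hn' : (0:ℝ) < n := by exact_mod_cast hn
  have hk1' : (1:ℝ) ≤ (k:ℝ) := by exact_mod_cast hk1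
  have hk2' : (k:ℝ) ≤ (n:ℝ) := by exact_mod_cast hk2
  have hcpos : 0 < c := by
    apply div_pos (mul_pos (by linarith) hπ) hn'
  have hclt : c < π := by
    rw [div_lt_iff₀ hn']
    nlinarith
  refine ⟨fun j => c * (j.val + 1), ?_⟩
  have hvext : ∀ i : Fin (n+1), vext n (fun j : Fin n => c * (j.val + 1)) i = c * i.val := by
    intro i
    induction i using Fin.cases with
    | zero => simp [vext]
    | succ j => simp [vext]
  have hlast : vlast n (fun j : Fin n => c * (j.val + 1)) = ((k:ℝ) - 1/2) * π := by
    rw [vlast, hvext]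
    simp only [Fin.val_last]
    rw [hc]
    field_simp
  refine ⟨⟨fun j => ?_, fun m => ?_⟩, ?_, ?_⟩
  · rw [hvext, hvext, Fin.val_succ, Fin.coe_castSucc]
    push_cast
    constructor
    · nlinarith
    · nlinarith
  · rw [hlast]
    intro h
    have : (k : ℝ) - 1/2 = m := by
      field_simp at h
      nlinarith [h]
    have : (2*k : ℝ) - 1 = 2*m := by linarith
    have : 2*k - 1 = 2*m := by exact_mod_cast this
    omega
  · rw [hlast]; nlinarith
  · rw [hlast]; nlinarith

lemma continuous_vlast (n : ℕ) : Continuous (vlast n) := by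
  cases n with
  | zero =>
    have : vlast 0 = fun _ => (0:ℝ) := by
      funext v; rfl
    rw [this]; exact continuous_const
  | succ m =>
    have : vlast (m+1) = fun v : Fin (m+1) → ℝ => v (Fin.last m) := by
      funext v
      rw [vlast, vext, show Fin.last (m+1) = (Fin.last m).succ from rfl, Fin.cons_succ]
    rw [this]; exact continuous_apply _

lemma exists_cross {g : ℝ → ℝ} (hg : Continuous g) (h : ⌈g 0 / π⌉ < ⌈g 1 / π⌉)
    (ha : ∀ m : ℤ, g 0 ≠ (m : ℝ) * π) :
    ∃ t ∈ Set.Icc (0:ℝ) 1, ∃ m : ℤ, g t = (m : ℝ) * π := by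
  have hπ := pi_pos
  set a := g 0
  set b := g 1
  set c : ℝ := (⌈a / π⌉ : ℝ) * π with hc
  have h1 : a < c := by
    have hle : a / π ≤ ⌈a / π⌉ := Int.le_ceil _
    have hne : a / π ≠ (⌈a / π⌉ : ℝ) := by
      intro hEq
      exact ha ⌈a / π⌉ (by rw [← hEq]; field_simp)
    have := lt_of_le_of_ne hle hne
    calc a = (a / π) * π := by field_simp
      _ < c := by rw [hc]; exact mul_lt_mul_of_pos_right this hπ
  have h2 : c ≤ b := by
    have hk : ⌈a / π⌉ ≤ ⌈b / π⌉ - 1 := by omega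
    have hk' : ((⌈b / π⌉ : ℝ) - 1) < b / π := by
      have := Int.ceil_lt_add_one (b / π)
      push_cast at this ⊢
      linarith
    have : ((⌈b / π⌉ : ℝ) - 1) * π < b := by
      calc ((⌈b / π⌉ : ℝ) - 1) * π < (b / π) * π := mul_lt_mul_of_pos_right hk' hπ
        _ = b := by field_simp
    calc c ≤ ((⌈b / π⌉ : ℝ) - 1) * π := by
          rw [hc]
          apply mul_le_mul_of_nonneg_right _ hπ.le
          push_cast
          exact_mod_cast by exact_mod_cast hk
      _ ≤ b := this.le
  have hmem : c ∈ Set.Icc a b := ⟨h1.le, h2⟩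
  have := intermediate_value_Icc (zero_le_one) hg.continuousOn hmem
  obtain ⟨t, ht, hgt⟩ := this
  exact ⟨t, ht, ⌈a / π⌉, hgt⟩

lemma joined_ceil_eq {n : ℕ} {v w : Fin n → ℝ}
    (h : JoinedIn (Tset n) v w) : ⌈vlast n v / π⌉ = ⌈vlast n w / π⌉ := by
  obtain ⟨γ, hγ⟩ := h
  set g : ℝ → ℝ := fun t => vlast n (γ.extend t) with hgdef
  have hg : Continuous g := (continuous_vlast n).comp γ.continuous_extend
  have hnot : ∀ t ∈ Set.Icc (0:ℝ) 1, ∀ m : ℤ, g t ≠ (m : ℝ) * π := by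
    intro t ht m
    rw [hgdef]
    simp only
    rw [γ.extend_apply ht]
    exact (hγ ⟨t, ht⟩).2 m
  have h0 : g 0 = vlast n v := by rw [hgdef]; simp
  have h1 : g 1 = vlast n w := by rw [hgdef]; simp
  by_contra hne
  rcases lt_or_gt_of_ne hne with hlt | hgt
  · rw [← h0, ← h1] at hlt
    obtain ⟨t, ht, m, hm⟩ := exists_cross hg hlt (by
      intro m; exact hnot 0 (by norm_num) m)
    exact hnot t ht m hm
  · set g' : ℝ → ℝ := fun t => g (1 - t) with hg'def
    have hg' : Continuous g' := hg.comp (by continuity)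
    have e0 : g' 0 = g 1 := by rw [hg'def]; norm_num
    have e1 : g' 1 = g 0 := by rw [hg'def]; norm_num
    have hlt : ⌈g' 0 / π⌉ < ⌈g' 1 / π⌉ := by
      rw [e0, e1, h0, h1]; exact hgt
    obtain ⟨t, ht, m, hm⟩ := exists_cross hg' hlt (by
      intro m; rw [e0]; exact hnot 1 (by norm_num) m)
    refine hnot (1 - t) ?_ m ?_
    · exact ⟨by linarith [ht.2], by linarith [ht.1]⟩
    · rw [← hm]

lemma ceil_range {n : ℕ} (hn : 1 ≤ n) {v : Fin n → ℝ} (hv : v ∈ Tset n) :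
    1 ≤ ⌈vlast n v / π⌉ ∧ ⌈vlast n v / π⌉ ≤ (n : ℤ) := by
  have hπ := pi_pos
  constructor
  · have : 0 < vlast n v / π := div_pos (vlast_pos hn hv) hπ
    exact Int.ceil_pos.mpr this
  · apply Int.ceil_le.mpr
    rw [div_le_iff₀ hπ]
    exact (vlast_lt hn hv).le

lemma slab_subset {n : ℕ} {k : ℤ} : Sl n k ⊆ Tset n := fun _ h => h.1

lemma joined_of_ceil_eq {n : ℕ} (hn : 1 ≤ n) {v w : Fin n → ℝ}
    (hv : v ∈ Tset n) (hw : w ∈ Tset n)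
    (h : ⌈vlast n v / π⌉ = ⌈vlast n w / π⌉) : JoinedIn (Tset n) v w := by
  set k := ⌈vlast n v / π⌉
  have hv' : v ∈ Sl n k := mem_slab_ceil hn hv
  have hw' : w ∈ Sl n k := by rw [h]; exact mem_slab_ceil hn hw
  have hconv := slab_convex n k
  exact ((hconv.isPathConnected ⟨v, hv'⟩).joinedIn v hv' w hw').mono slab_subset

def wit {n : ℕ} (hn : 1 ≤ n) (i : Fin n) : Fin n → ℝ :=
  (slab_nonempty hn (k := (i : ℤ) + 1) (by omega) (by omega)).choose

lemma wit_mem {n : ℕ} (hn : 1 ≤ n) (i : Fin n) : wit hn i ∈ Sl n ((i : ℤ) + 1) :=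
  (slab_nonempty hn (k := (i : ℤ) + 1) (by omega) (by omega)).choose_spec

def homEquiv {n : ℕ} (hn : 1 ≤ n) : ZerothHomotopy ↥(Tset n) ≃ Fin n where
  toFun := Quotient.lift
    (fun p : ↥(Tset n) => (⟨(⌈vlast n p.1 / π⌉ - 1).toNat, by
        obtain ⟨h1, h2⟩ := ceil_range hn p.2
        omega⟩ : Fin n))
    (by
      intro a b hab
      have : JoinedIn (Tset n) a.1 b.1 := (joinedIn_iff_joined a.2 b.2).mpr hab
      simp only [Fin.mk.injEq]
      rw [joined_ceil_eq this])
  invFun := fun i => Quotient.mk (pathSetoid _) ⟨wit hn i, (wit_mem hn i).1⟩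
  left_inv := by
    apply Quotient.ind
    intro p
    apply Quotient.sound
    have hk := ceil_range hn p.2
    have hw := wit_mem hn (⟨(⌈vlast n p.1 / π⌉ - 1).toNat, by omega⟩ : Fin n)
    have hkk : ((⟨(⌈vlast n p.1 / π⌉ - 1).toNat, by omega⟩ : Fin n) : ℤ) + 1
        = ⌈vlast n p.1 / π⌉ := by
      simp only [Fin.val_mk]
      omega
    rw [hkk] at hw
    have hp : p.1 ∈ Sl n ⌈vlast n p.1 / π⌉ := mem_slab_ceil hn p.2
    have hconv := slab_convex n ⌈vlast n p.1 / π⌉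
    have hj : JoinedIn (Tset n) (wit hn _) p.1 :=
      ((hconv.isPathConnected ⟨_, hw⟩).joinedIn _ hw _ hp).mono slab_subset
    exact (joinedIn_iff_joined _ p.2).mp hj
  right_inv := by
    intro i
    have hw := wit_mem hn i
    have := slab_ceil_eq hw
    simp only [Quotient.lift_mk]
    ext
    simp only [Fin.val_mk]
    omega


/-- **Proposition 3.10, non-AF case, in reduced coordinates.**
Two points of `T_n` are joined by a path in `T_n` iff `⌈v_n/π⌉ = ⌈w_n/π⌉`; each slab
`{v ∈ T_n : (k−1)π < v_n < kπ}` is convex and nonempty exactly when `1 ≤ k ≤ n`;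
consequently `T_n` has exactly `n` path components. -/
theorem stmt14 (n : ℕ) (hn : 1 ≤ n) :
    (∀ v ∈ Tset n, ∀ w ∈ Tset n,
      (JoinedIn (Tset n) v w ↔ ⌈vlast n v / π⌉ = ⌈vlast n w / π⌉)) ∧
    (∀ k : ℤ,
      Convex ℝ {v ∈ Tset n | ((k : ℝ) - 1) * π < vlast n v ∧ vlast n v < (k : ℝ) * π}) ∧
    (∀ k : ℤ,
      ({v ∈ Tset n | ((k : ℝ) - 1) * π < vlast n v ∧ vlast n v < (k : ℝ) * π}.Nonempty ↔
        1 ≤ k ∧ k ≤ (n : ℤ))) ∧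
    Nat.card (ZerothHomotopy ↥(Tset n)) = n := by
  refine ⟨fun v hv w hw => ⟨joined_ceil_eq, joined_of_ceil_eq hn hv hw⟩,
    fun k => slab_convex n k, fun k => ⟨?_, fun ⟨h1, h2⟩ => slab_nonempty hn h1 h2⟩, ?_⟩
  · rintro ⟨v, hv⟩
    have : ⌈vlast n v / π⌉ = k := slab_ceil_eq hv
    have := ceil_range hn hv.1
    omega
  · rw [Nat.card_congr (homEquiv hn)]
    simp
end
end

section
/- (Proposition 3.10 of the paper, AF case, in reduced coordinates.) Let n ≥ 1 and define T_n^{AF} := {(v₁,…,v_n) ∈ ℝⁿ : 0 < v₁ < π, 0 < v_j − v_{j−1} < π for 2 ≤ j ≤ n, and v_n ∈ πℤ}. Then: (a) for each integer k, the set {v ∈ T_n^{AF} : v_n = kπ} is convex, and it is nonempty exactly when 1 ≤ k ≤ n−1; (b) two points v, w ∈ T_n^{AF} lie in the same path component of T_n^{AF} if and only if v_n = w_n; (c) consequently T_n^{AF} has exactly n−1 path components, and T₁^{AF} = ∅. -/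
noncomputable section

open Real

/-- The space `T_n^{AF}` of angle lifts of AF-type rod structures:
`0 = v₀ < v₁ < … < v_n`, consecutive gaps in `(0,π)`, and `v_n ∈ πℤ`. -/
def TsetAF (n : ℕ) : Set (Fin n → ℝ) :=
  {v | (∀ j : Fin n,
          0 < vext n v j.succ - vext n v j.castSucc ∧
          vext n v j.succ - vext n v j.castSucc < π) ∧
       ∃ k : ℤ, vlast n v = (k : ℝ) * π}

namespace Stmt15Aux

lemma vext_zero (n : ℕ) (v : Fin n → ℝ) : vext n v 0 = 0 := rfl

lemma vext_succ (n : ℕ) (v : Fin n → ℝ) (j : Fin n) : vext n v j.succ = v j := by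
  simp [vext]

lemma vext_castSucc (n : ℕ) (v : Fin n → ℝ) (j : Fin n) :
    vext n v j.castSucc =
      if h : (j : ℕ) = 0 then 0
      else v ⟨(j : ℕ) - 1, lt_of_le_of_lt (Nat.sub_le _ _) j.isLt⟩ := by
  rcases j with ⟨jv, hj⟩
  cases jv with
  | zero =>
    have he : Fin.castSucc (⟨0, hj⟩ : Fin n) = (0 : Fin (n + 1)) := Fin.ext (by simp)
    rw [he]
    simp [vext]
  | succ m =>
    have he : Fin.castSucc (⟨m + 1, hj⟩ : Fin n) = Fin.succ ⟨m, by omega⟩ :=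
      Fin.ext (by simp)
    rw [he, vext, Fin.cons_succ]
    simp

lemma vlast_eq (n : ℕ) (hn : 1 ≤ n) (v : Fin n → ℝ) :
    vlast n v = v ⟨n - 1, by omega⟩ := by
  have he : Fin.last n = Fin.succ ⟨n - 1, by omega⟩ := Fin.ext (by simp; omega)
  rw [vlast, he, vext_succ]

lemma vlast_eq_sum (n : ℕ) (v : Fin n → ℝ) :
    vlast n v = ∑ j : Fin n, (vext n v j.succ - vext n v j.castSucc) := by
  classical
  set f : ℕ → ℝ := fun i => if h : i < n + 1 then vext n v ⟨i, h⟩ else 0 with hf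
  have hstep : ∀ j : Fin n,
      vext n v j.succ - vext n v j.castSucc = f ((j : ℕ) + 1) - f (j : ℕ) := by
    intro j
    have h1 : (j : ℕ) + 1 < n + 1 := Nat.succ_lt_succ j.isLt
    have h2 : (j : ℕ) < n + 1 := Nat.lt_succ_of_lt j.isLt
    simp only [hf, dif_pos h1, dif_pos h2]
    congr 1
  have hsum : ∑ j : Fin n, (vext n v j.succ - vext n v j.castSucc)
      = ∑ j : Fin n, (fun i => f (i + 1) - f i) (j : ℕ) :=
    Finset.sum_congr rfl fun j _ => hstep j
  rw [hsum, Fin.sum_univ_eq_sum_range (fun i => f (i + 1) - f i), Finset.sum_range_sub]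
  have hfn : f n = vlast n v := by
    simp only [hf, dif_pos (Nat.lt_succ_self n)]
    rfl
  have hf0 : f 0 = 0 := by
    simp only [hf, dif_pos (Nat.succ_pos n)]
    rfl
  rw [hfn, hf0, sub_zero]

lemma vlast_bounds (n : ℕ) (hn : 1 ≤ n) {v : Fin n → ℝ} (hv : v ∈ TsetAF n) :
    0 < vlast n v ∧ vlast n v < n * π := by
  obtain ⟨hgap, -⟩ := hv
  haveI : Nonempty (Fin n) := ⟨⟨0, hn⟩⟩
  rw [vlast_eq_sum]
  constructor
  · exact Finset.sum_pos (fun j _ => (hgap j).1) Finset.univ_nonempty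
  · calc ∑ j : Fin n, (vext n v j.succ - vext n v j.castSucc)
        < ∑ _j : Fin n, π :=
          Finset.sum_lt_sum_of_nonempty Finset.univ_nonempty (fun j _ => (hgap j).2)
      _ = n * π := by
          simp [Finset.sum_const, Finset.card_univ, nsmul_eq_mul]

lemma slice_convex (n : ℕ) (k : ℤ) :
    Convex ℝ {v ∈ TsetAF n | vlast n v = (k : ℝ) * π} := by
  rintro v ⟨⟨hvg, -⟩, hvl⟩ w ⟨⟨hwg, -⟩, hwl⟩ a b ha hb hab
  have hcombo : ∀ i : Fin (n + 1),
      vext n (a • v + b • w) i = a * vext n v i + b * vext n w i := by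
    intro i
    induction i using Fin.cases with
    | zero => simp [vext]
    | succ j => simp [vext, Fin.cons_succ]
  have hlast : vlast n (a • v + b • w) = (k : ℝ) * π := by
    have h := hcombo (Fin.last n)
    rw [vlast, h]
    have h1 : vext n v (Fin.last n) = (k : ℝ) * π := hvl
    have h2 : vext n w (Fin.last n) = (k : ℝ) * π := hwl
    rw [h1, h2]
    linear_combination ((k : ℝ) * π) * hab
  refine ⟨⟨fun j => ?_, ⟨k, hlast⟩⟩, hlast⟩
  rw [hcombo j.succ, hcombo j.castSucc]
  have hv := hvg j
  have hw := hwg j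
  have hmem := convex_Ioo (0 : ℝ) π ⟨hv.1, hv.2⟩ ⟨hw.1, hw.2⟩ ha hb hab
  simp only [smul_eq_mul, Set.mem_Ioo] at hmem
  obtain ⟨hm1, hm2⟩ := hmem
  constructor <;> nlinarith [hm1, hm2]

lemma slice_nonempty_of (n : ℕ) (hn : 1 ≤ n) (k : ℤ) (h1 : 1 ≤ k) (h2 : k ≤ (n : ℤ) - 1) :
    {v ∈ TsetAF n | vlast n v = (k : ℝ) * π}.Nonempty := by
  have hnpos : (0 : ℝ) < n := by exact_mod_cast hn
  set c : ℝ := (k : ℝ) * π / n with hc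
  have hk1 : (1 : ℝ) ≤ (k : ℝ) := by exact_mod_cast h1
  have hkn : (k : ℝ) < (n : ℝ) := by exact_mod_cast (by omega : k < (n : ℤ))
  have hcpos : 0 < c := div_pos (mul_pos (by linarith) pi_pos) hnpos
  have hclt : c < π := by
    rw [hc, div_lt_iff₀ hnpos]
    nlinarith [pi_pos]
  set w : Fin n → ℝ := fun j => ((j : ℕ) + 1) * c with hw
  have hg : ∀ j : Fin n, vext n w j.succ - vext n w j.castSucc = c := by
    intro j
    rw [vext_succ, vext_castSucc]
    by_cases h : (j : ℕ) = 0
    · rw [dif_pos h]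
      simp [hw, h]
    · rw [dif_neg h]
      simp only [hw]
      have h1' : (1 : ℕ) ≤ (j : ℕ) := Nat.one_le_iff_ne_zero.mpr h
      push_cast [Nat.cast_sub h1']
      ring
  have hlastw : vlast n w = (k : ℝ) * π := by
    rw [vlast_eq_sum, Finset.sum_congr rfl fun j _ => hg j]
    simp only [Finset.sum_const, Finset.card_univ, Fintype.card_fin, nsmul_eq_mul, hc]
    field_simp
  exact ⟨w, ⟨⟨fun j => by rw [hg j]; exact ⟨hcpos, hclt⟩, ⟨k, hlastw⟩⟩, hlastw⟩⟩

lemma slice_nonempty_iff (n : ℕ) (hn : 1 ≤ n) (k : ℤ) :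
    {v ∈ TsetAF n | vlast n v = (k : ℝ) * π}.Nonempty ↔ 1 ≤ k ∧ k ≤ (n : ℤ) - 1 := by
  constructor
  · rintro ⟨v, hv, hvl⟩
    obtain ⟨hpos, hlt⟩ := vlast_bounds n hn hv
    rw [hvl] at hpos hlt
    have h1 : (0 : ℝ) < (k : ℝ) := by
      by_contra h
      push_neg at h
      nlinarith [pi_pos]
    have h2 : (k : ℝ) < (n : ℝ) := by
      by_contra h
      push_neg at h
      nlinarith [pi_pos]
    have h1' : 0 < k := by exact_mod_cast h1
    have h2' : k < (n : ℤ) := by exact_mod_cast h2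
    omega
  · rintro ⟨h1, h2⟩
    exact slice_nonempty_of n hn k h1 h2

lemma joined_iff (n : ℕ) (hn : 1 ≤ n) {v w : Fin n → ℝ}
    (hv : v ∈ TsetAF n) (hw : w ∈ TsetAF n) :
    JoinedIn (TsetAF n) v w ↔ vlast n v = vlast n w := by
  constructor
  · rintro ⟨γ, hγ⟩
    by_contra hne
    obtain ⟨k1, hk1⟩ := hv.2
    obtain ⟨k2, hk2⟩ := hw.2
    have hkne : k1 ≠ k2 := by
      intro h
      exact hne (by rw [hk1, hk2, h])
    set G : ℝ → ℝ := fun t => vlast n (γ.extend t) with hG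
    have hGc : Continuous G := by
      have hGeq : G = (fun u : Fin n → ℝ => u ⟨n - 1, by omega⟩) ∘ γ.extend := by
        funext t
        simp [hG, vlast_eq n hn]
      rw [hGeq]
      exact (continuous_apply _).comp γ.continuous_extend
    have hG0 : G 0 = vlast n v := by simp [hG]
    have hG1 : G 1 = vlast n w := by simp [hG]
    set j : ℤ := min k1 k2 with hj
    set c : ℝ := (j : ℝ) * π + π / 2 with hc
    have hcmem : c ∈ Set.uIcc (G 0) (G 1) := by
      rw [hG0, hG1, hk1, hk2, Set.mem_uIcc]
      rcases le_total k1 k2 with h | h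
      · left
        have hmin : (j : ℝ) = (k1 : ℝ) := by
          rw [hj]; exact_mod_cast congrArg (fun z : ℤ => (z : ℝ)) (min_eq_left h)
        have h12 : (k1 : ℝ) + 1 ≤ (k2 : ℝ) := by exact_mod_cast (by omega : k1 + 1 ≤ k2)
        rw [hc, hmin]
        constructor <;> nlinarith [pi_pos]
      · right
        have hmin : (j : ℝ) = (k2 : ℝ) := by
          rw [hj]; exact_mod_cast congrArg (fun z : ℤ => (z : ℝ)) (min_eq_right h)
        have h12 : (k2 : ℝ) + 1 ≤ (k1 : ℝ) := by
          exact_mod_cast (by omega : k2 + 1 ≤ k1)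
        rw [hc, hmin]
        constructor <;> nlinarith [pi_pos]
    obtain ⟨t, ht, hGt⟩ := intermediate_value_uIcc (hGc.continuousOn) hcmem
    rw [Set.uIcc_of_le (zero_le_one' ℝ)] at ht
    have htmem : γ.extend t ∈ TsetAF n := by
      rw [γ.extend_apply ht]
      exact hγ _
    obtain ⟨m, hm⟩ := htmem.2
    have hceq : c = (m : ℝ) * π := by rw [← hGt]; exact hm
    have h2 : ((2 * (m - j) : ℤ) : ℝ) * π = 1 * π := by
      push_cast
      push_cast [hc] at hceq
      linear_combination (-2 : ℝ) * hceq
    have h3 : ((2 * (m - j) : ℤ) : ℝ) = 1 := mul_right_cancel₀ pi_ne_zero h2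
    have h4 : (2 * (m - j) : ℤ) = 1 := by exact_mod_cast h3
    omega
  · intro heq
    obtain ⟨k, hk⟩ := hv.2
    have hwk : vlast n w = (k : ℝ) * π := by rw [← heq]; exact hk
    have hpc := (slice_convex n k).isPathConnected ⟨v, hv, hk⟩
    exact (hpc.joinedIn v ⟨hv, hk⟩ w ⟨hw, hwk⟩).mono (Set.sep_subset _ _)

end Stmt15Aux

open Stmt15Aux in
/-- **Proposition 3.10, AF case, in reduced coordinates.**
(a) each slice `{v ∈ T_n^{AF} : v_n = kπ}` is convex, and is nonempty exactly when
`1 ≤ k ≤ n−1`; (b) two points of `T_n^{AF}` are joined by a path in `T_n^{AF}` iff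
`v_n = w_n`; (c) `T_n^{AF}` has exactly `n−1` path components, and `T₁^{AF} = ∅`. -/
theorem stmt15 (n : ℕ) (hn : 1 ≤ n) :
    (∀ k : ℤ, Convex ℝ {v ∈ TsetAF n | vlast n v = (k : ℝ) * π}) ∧
    (∀ k : ℤ,
      ({v ∈ TsetAF n | vlast n v = (k : ℝ) * π}.Nonempty ↔ 1 ≤ k ∧ k ≤ (n : ℤ) - 1)) ∧
    (∀ v ∈ TsetAF n, ∀ w ∈ TsetAF n,
      (JoinedIn (TsetAF n) v w ↔ vlast n v = vlast n w)) ∧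
    Nat.card (ZerothHomotopy ↥(TsetAF n)) = n - 1 ∧
    TsetAF 1 = ∅ := by
  refine ⟨slice_convex n, fun k => slice_nonempty_iff n hn k,
    fun v hv w hw => joined_iff n hn hv hw, ?_, ?_⟩
  · -- number of path components
    classical
    -- the integer attached to a point of `TsetAF n`
    set K : ↥(TsetAF n) → ℤ := fun v => round (vlast n v.1 / π) with hK
    have hKspec : ∀ v : ↥(TsetAF n), vlast n v.1 = (K v : ℝ) * π := by
      intro v
      obtain ⟨k, hk⟩ := v.2.2
      have : K v = k := by
        simp only [hK]
        rw [hk, mul_div_assoc, div_self pi_ne_zero, mul_one, round_intCast]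
      rw [this, hk]
    have hKbounds : ∀ v : ↥(TsetAF n), 1 ≤ K v ∧ K v ≤ (n : ℤ) - 1 := by
      intro v
      exact (slice_nonempty_iff n hn (K v)).1 ⟨v.1, v.2, hKspec v⟩
    have hKresp : ∀ a b : ↥(TsetAF n), Joined a b → K a = K b := by
      intro a b hab
      obtain ⟨γ⟩ := hab
      have hJ : JoinedIn (TsetAF n) a.1 b.1 :=
        ⟨γ.map continuous_subtype_val, fun t => (γ t).2⟩
      have hvl : vlast n a.1 = vlast n b.1 := (joined_iff n hn a.2 b.2).1 hJ
      have := hKspec a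
      rw [hvl, hKspec b] at this
      exact_mod_cast (mul_right_cancel₀ pi_ne_zero this).symm
    set q : ZerothHomotopy ↥(TsetAF n) → ℤ :=
      Quotient.lift K hKresp with hq
    have hqbounds : ∀ x : ZerothHomotopy ↥(TsetAF n), 1 ≤ q x ∧ q x ≤ (n : ℤ) - 1 := by
      intro x
      induction x using Quotient.ind with
      | _ a => exact hKbounds a
    set h : ZerothHomotopy ↥(TsetAF n) → Fin (n - 1) :=
      fun x => ⟨(q x - 1).toNat, by have := hqbounds x; omega⟩ with hh
    have hinj : Function.Injective h := by
      intro x y hxy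
      have hx := hqbounds x
      have hy := hqbounds y
      have : (q x - 1).toNat = (q y - 1).toNat := congrArg Fin.val hxy
      have hqeq : q x = q y := by omega
      induction x using Quotient.ind with
      | _ a =>
        induction y using Quotient.ind with
        | _ b =>
          have hKeq : K a = K b := hqeq
          have hvl : vlast n a.1 = vlast n b.1 := by
            rw [hKspec a, hKspec b, hKeq]
          have hJ : JoinedIn (TsetAF n) a.1 b.1 := (joined_iff n hn a.2 b.2).2 hvl
          have hJoined : Joined a b := by
            have := hJ.joined_subtype
            simpa using this
          exact Quotient.sound hJoined
    have hsurj : Function.Surjective h := by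
      intro i
      have hi : (i : ℕ) < n - 1 := i.isLt
      have h1 : 1 ≤ ((i : ℕ) : ℤ) + 1 := by omega
      have h2 : ((i : ℕ) : ℤ) + 1 ≤ (n : ℤ) - 1 := by omega
      obtain ⟨v, hvT, hvl⟩ := slice_nonempty_of n hn (((i : ℕ) : ℤ) + 1) h1 h2
      refine ⟨Quotient.mk _ ⟨v, hvT⟩, ?_⟩
      have hKv : K ⟨v, hvT⟩ = ((i : ℕ) : ℤ) + 1 := by
        have := hKspec ⟨v, hvT⟩
        rw [hvl] at this
        exact_mod_cast (mul_right_cancel₀ pi_ne_zero this.symm)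
      have hqv : q (Quotient.mk _ ⟨v, hvT⟩) = ((i : ℕ) : ℤ) + 1 := hKv
      apply Fin.ext
      simp only [hh, hqv]
      omega
    have := Nat.card_congr (Equiv.ofBijective h ⟨hinj, hsurj⟩)
    rw [this]
    simp
  · -- `TsetAF 1 = ∅`
    ext v
    simp only [Set.mem_empty_iff_false, iff_false]
    rintro ⟨hgap, k, hk⟩
    have h0 := hgap 0
    have hs : vext 1 v (Fin.succ 0) = v 0 := vext_succ 1 v 0
    have hc : vext 1 v (Fin.castSucc 0) = 0 := by
      have : Fin.castSucc (0 : Fin 1) = (0 : Fin 2) := rfl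
      rw [this, vext_zero]
    rw [hs, hc, sub_zero] at h0
    have hlast : vlast 1 v = v 0 := by
      have : Fin.last 1 = Fin.succ (0 : Fin 1) := rfl
      rw [vlast, this, vext_succ]
    rw [hlast] at hk
    rcases le_or_gt k 0 with h | h
    · have : (k : ℝ) ≤ 0 := by exact_mod_cast h
      nlinarith [pi_pos, h0.1]
    · have : (1 : ℝ) ≤ (k : ℝ) := by exact_mod_cast h
      nlinarith [pi_pos, h0.2]
end
end

section
/- (Degree of the rod structures used to prove Theorem 1.1.) Let n ≥ 1. Define vectors w₀ := (1,0), w_{n+1} := (1,0), and for 1 ≤ j ≤ n let w_j := (0,1) if j is odd and w_j := (−1,1) if j is even. Then there exists exactly one sequence of reals 0 = v₀ < v₁ < … < v_{n+1} with v_j − v_{j−1} < π for all 1 ≤ j ≤ n+1 such that for each 0 ≤ j ≤ n+1 the vector (cos v_j, sin v_j) is a nonzero real scalar multiple of w_j; and this unique sequence satisfies v_{n+1} = ⌊(n+1)/2⌋ · π. -/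
noncomputable section

open Real

/-- The rod vectors of the rod structure used to prove Theorem 1.1:
`w₀ = w_{n+1} = (1,0)`, `w_j = (0,1)` for odd `j`, `w_j = (−1,1)` for even `j`,
`1 ≤ j ≤ n`. -/
def rodVec (n : ℕ) (j : ℕ) : ℝ × ℝ :=
  if j = 0 ∨ j = n + 1 then (1, 0) else if Odd j then (0, 1) else (-1, 1)

/-- `v : Fin (n+2) → ℝ` is an admissible angle lift of the rod vectors `rodVec n`:
`v₀ = 0`, consecutive gaps in `(0,π)`, and each `(cos v_j, sin v_j)` is a nonzero real
multiple of `w_j`. -/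
def IsAngleLift (n : ℕ) (v : Fin (n + 2) → ℝ) : Prop :=
  v 0 = 0 ∧
  (∀ j : Fin (n + 1), 0 < v j.succ - v j.castSucc ∧ v j.succ - v j.castSucc < π) ∧
  (∀ j : Fin (n + 2), ∃ t : ℝ, t ≠ 0 ∧
    Real.cos (v j) = t * (rodVec n (j : ℕ)).1 ∧
    Real.sin (v j) = t * (rodVec n (j : ℕ)).2)

namespace Stmt16Aux

/-- The residue class (mod `π`) forced by the rod vector `rodVec n j`. -/
def cc (n j : ℕ) : ℝ := if j = 0 ∨ j = n + 1 then 0 else if Odd j then π / 2 else -(π / 4)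

/-- The explicit angle lift. -/
def vd (n j : ℕ) : ℝ :=
  if j = 0 then 0
  else if j = n + 1 then ((n + 1) / 2 : ℕ) * π
  else if Odd j then j * (π / 2)
  else j * (π / 2) - π / 4

lemma exists_mod (n j : ℕ) : ∃ m : ℤ, vd n j = m * π + cc n j := by
  unfold vd cc
  by_cases h0 : j = 0
  · exact ⟨0, by simp [h0]⟩
  by_cases h1 : j = n + 1
  · refine ⟨(((n + 1) / 2 : ℕ) : ℤ), ?_⟩
    rw [if_neg h0, if_pos h1, if_pos (Or.inr h1), Int.cast_natCast]
    ring
  rcases Nat.even_or_odd j with he | ho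
  · obtain ⟨k, rfl⟩ := he
    refine ⟨(k : ℤ), ?_⟩
    have : ¬ Odd (k + k) := by rw [Nat.odd_iff]; omega
    simp only [h0, h1, if_neg, this, if_false, or_self, ite_false]
    push_cast
    ring
  · obtain ⟨k, rfl⟩ := ho
    refine ⟨(k : ℤ), ?_⟩
    have : Odd (2 * k + 1) := ⟨k, by ring⟩
    simp only [h0, h1, or_self, ite_false, this, ite_true]
    push_cast
    ring

lemma gap (n : ℕ) (hn : 1 ≤ n) (j : ℕ) (hj : j ≤ n) :
    0 < vd n (j + 1) - vd n j ∧ vd n (j + 1) - vd n j < π := by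
  have hpi := pi_pos
  by_cases h0 : j = 0
  · subst h0
    have h1 : n ≠ 0 := by omega
    have hv1 : vd n 1 = π / 2 := by
      simp [vd, h1, Nat.odd_iff]
    have hv0 : vd n 0 = 0 := by simp [vd]
    rw [show (0 + 1 : ℕ) = 1 from rfl, hv1, hv0]
    constructor <;> linarith
  by_cases hjn : j = n
  · have hn0 : j ≠ 0 := by omega
    have hnn : j ≠ n + 1 := by omega
    have hj1 : j + 1 = n + 1 := by omega
    have hvd1 : vd n (j + 1) = ((n + 1) / 2 : ℕ) * π := by
      rw [hj1]; simp [vd]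
    rcases Nat.even_or_odd j with he | ho
    · obtain ⟨k, hk⟩ := he
      have hk1 : 1 ≤ k := by omega
      have hdiv : ((n + 1) / 2 : ℕ) = k := by omega
      have hodd : ¬ Odd j := by rw [Nat.odd_iff]; omega
      have hv : vd n j = j * (π / 2) - π / 4 := by
        simp [vd, hn0, hnn, hodd]
      rw [hvd1, hdiv, hv, hk]
      push_cast
      constructor <;> linarith
    · obtain ⟨k, hk⟩ := ho
      have hdiv : ((n + 1) / 2 : ℕ) = k + 1 := by omega
      have hodd : Odd j := ⟨k, hk⟩
      have hv : vd n j = j * (π / 2) := by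
        simp [vd, hn0, hnn, hodd]
      rw [hvd1, hdiv, hv, hk]
      push_cast
      constructor <;> linarith
  · -- 1 ≤ j, j + 1 ≤ n : both interior
    have hj1 : j + 1 ≠ n + 1 := by omega
    have hj1' : j + 1 ≠ 0 := by omega
    have hjn1 : j ≠ n + 1 := by omega
    rcases Nat.even_or_odd j with he | ho
    · obtain ⟨k, rfl⟩ := he
      have hodd : ¬ Odd (k + k) := by rw [Nat.odd_iff]; omega
      have hodd1 : Odd (k + k + 1) := ⟨k, by ring⟩
      have hv : vd n (k + k) = (k + k) * (π / 2) - π / 4 := by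
        simp [vd, h0, hjn1, hodd]
        intro h; omega
      have hv1 : vd n (k + k + 1) = (k + k + 1) * (π / 2) := by
        simp [vd, hj1', hj1, hodd1, hjn]
      rw [hv, hv1]
      push_cast
      constructor <;> linarith
    · obtain ⟨k, rfl⟩ := ho
      have hodd : Odd (2 * k + 1) := ⟨k, by ring⟩
      have hodd1 : ¬ Odd (2 * k + 1 + 1) := by rw [Nat.odd_iff]; omega
      have hv : vd n (2 * k + 1) = (2 * k + 1) * (π / 2) := by
        simp [vd, h0, hjn1, hodd]
        intro h; omega
      have hv1 : vd n (2 * k + 1 + 1) = (2 * k + 1 + 1) * (π / 2) - π / 4 := by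
        simp [vd, hj1', hj1, hodd1, hjn]
      rw [hv, hv1]
      push_cast
      constructor <;> linarith

lemma classify (n j : ℕ) (θ : ℝ) :
    (∃ t : ℝ, t ≠ 0 ∧ Real.cos θ = t * (rodVec n j).1 ∧ Real.sin θ = t * (rodVec n j).2) ↔
    ∃ m : ℤ, θ = m * π + cc n j := by
  have hsq := Real.sin_sq_add_cos_sq θ
  unfold rodVec cc
  by_cases h0 : j = 0 ∨ j = n + 1
  · simp only [h0, if_true]
    constructor
    · rintro ⟨t, ht, hc, hs⟩
      simp only [mul_zero] at hs
      obtain ⟨m, hm⟩ := Real.sin_eq_zero_iff.1 hs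
      exact ⟨m, by rw [← hm]; ring⟩
    · rintro ⟨m, rfl⟩
      have hs : Real.sin ((m : ℝ) * π + 0) = 0 := by
        simpa using Real.sin_int_mul_pi m
      refine ⟨Real.cos ((m : ℝ) * π + 0), ?_, by ring, by simp [hs]⟩
      intro h
      rw [hs, h] at hsq
      norm_num at hsq
  · simp only [h0, if_false]
    by_cases ho : Odd j
    · simp only [ho, if_true]
      constructor
      · rintro ⟨t, ht, hc, hs⟩
        simp only [mul_zero] at hc
        obtain ⟨m, hm⟩ := Real.cos_eq_zero_iff.1 hc
        exact ⟨m, by rw [hm]; ring⟩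
      · rintro ⟨m, rfl⟩
        have hc : Real.cos ((m : ℝ) * π + π / 2) = 0 := by
          apply Real.cos_eq_zero_iff.2 ⟨m, by ring⟩
        refine ⟨Real.sin ((m : ℝ) * π + π / 2), ?_, by simp [hc], by ring⟩
        intro h
        rw [hc, h] at hsq
        norm_num at hsq
    · simp only [ho, if_false]
      have key : ∀ x : ℝ, Real.sin x + Real.cos x = Real.sqrt 2 * Real.sin (x + π / 4) := by
        intro x
        rw [Real.sin_add, Real.cos_pi_div_four, Real.sin_pi_div_four]
        have h2 : Real.sqrt 2 * Real.sqrt 2 = 2 := Real.mul_self_sqrt (by norm_num)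
        linear_combination (-(Real.sin x + Real.cos x) / 2) * h2
      have h2pos : (0:ℝ) < Real.sqrt 2 := by positivity
      constructor
      · rintro ⟨t, ht, hc, hs⟩
        have hsum : Real.sin θ + Real.cos θ = 0 := by rw [hc, hs]; ring
        rw [key θ] at hsum
        have : Real.sin (θ + π / 4) = 0 := by
          rcases mul_eq_zero.1 hsum with h | h
          · exact absurd h (ne_of_gt h2pos)
          · exact h
        obtain ⟨m, hm⟩ := Real.sin_eq_zero_iff.1 this
        exact ⟨m, by linarith⟩
      · rintro ⟨m, rfl⟩
        have hs0 : Real.sin ((m : ℝ) * π + -(π / 4) + π / 4) = 0 := by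
          simpa using Real.sin_int_mul_pi m
        have hsum : Real.sin ((m : ℝ) * π + -(π / 4)) +
            Real.cos ((m : ℝ) * π + -(π / 4)) = 0 := by
          rw [key, hs0]; ring
        refine ⟨Real.sin ((m : ℝ) * π + -(π / 4)), ?_, by linarith, by ring⟩
        intro h
        rw [h] at hsum
        simp only [zero_add] at hsum
        rw [h, hsum] at hsq
        norm_num at hsq

lemma unique_in (a c θ₁ θ₂ : ℝ)
    (h1 : ∃ m : ℤ, θ₁ = m * π + c) (h2 : ∃ m : ℤ, θ₂ = m * π + c)
    (b1 : a < θ₁) (b1' : θ₁ < a + π) (b2 : a < θ₂) (b2' : θ₂ < a + π) : θ₁ = θ₂ := by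
  obtain ⟨m1, rfl⟩ := h1
  obtain ⟨m2, rfl⟩ := h2
  have hpi := pi_pos
  have hd1 : ((m1 : ℝ) - m2) * π < π := by nlinarith
  have hd2 : ((m2 : ℝ) - m1) * π < π := by nlinarith
  have e1 : (m1 : ℝ) - m2 < 1 := by nlinarith
  have e2 : (m2 : ℝ) - m1 < 1 := by nlinarith
  have : m1 = m2 := by
    have i1 : (m1 : ℝ) < m2 + 1 := by linarith
    have i2 : (m2 : ℝ) < m1 + 1 := by linarith
    have j1 : m1 < m2 + 1 := by exact_mod_cast i1
    have j2 : m2 < m1 + 1 := by exact_mod_cast i2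
    omega
  rw [this]

/-- The canonical lift as a function on `Fin (n+2)`. -/
def V (n : ℕ) : Fin (n + 2) → ℝ := fun j => vd n (j : ℕ)

lemma V_isLift (n : ℕ) (hn : 1 ≤ n) : IsAngleLift n (V n) := by
  refine ⟨by simp [V, vd], ?_, ?_⟩
  · intro j
    have hj : (j : ℕ) ≤ n := by omega
    have := gap n hn (j : ℕ) hj
    simpa [V, Fin.val_succ, Fin.coe_castSucc] using this
  · intro j
    exact (classify n (j : ℕ) _).2 (exists_mod n (j : ℕ))

lemma lift_unique (n : ℕ) (hn : 1 ≤ n) (v : Fin (n + 2) → ℝ) (hv : IsAngleLift n v) :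
    v = V n := by
  obtain ⟨h0, hgap, hmul⟩ := hv
  funext j
  induction j using Fin.induction with
  | zero => simp [V, vd, h0]
  | succ i ih =>
    have hj : (i : ℕ) ≤ n := by omega
    have hg := gap n hn (i : ℕ) hj
    have hv1 : ∃ m : ℤ, v i.succ = m * π + cc n ((i : ℕ) + 1) := by
      have := (classify n (i.succ : ℕ) (v i.succ)).1 (hmul i.succ)
      simpa [Fin.val_succ] using this
    have hv2 : ∃ m : ℤ, vd n ((i : ℕ) + 1) = m * π + cc n ((i : ℕ) + 1) :=
      exists_mod n ((i : ℕ) + 1)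
    have hgi := hgap i
    rw [ih] at hgi
    have hVc : V n i.castSucc = vd n (i : ℕ) := by simp [V]
    rw [hVc] at hgi
    have : v i.succ = vd n ((i : ℕ) + 1) := by
      apply unique_in (vd n (i : ℕ)) (cc n ((i : ℕ) + 1)) _ _ hv1 hv2
      · linarith [hgi.1]
      · linarith [hgi.2]
      · linarith [hg.1]
      · linarith [hg.2]
    simpa [V, Fin.val_succ] using this

end Stmt16Aux

/-- For the rod vectors `w₀,…,w_{n+1}` of the rod structure used to
prove Theorem 1.1, there is exactly one angle lift `0 = v₀ < v₁ < … < v_{n+1}` with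
consecutive gaps `< π`, and it satisfies `v_{n+1} = ⌊(n+1)/2⌋·π`. -/
theorem stmt16 (n : ℕ) (hn : 1 ≤ n) :
    (∃! v : Fin (n + 2) → ℝ, IsAngleLift n v) ∧
    (∀ v : Fin (n + 2) → ℝ, IsAngleLift n v →
      v (Fin.last (n + 1)) = ((n + 1) / 2 : ℕ) * π) := by
  constructor
  · exact ⟨Stmt16Aux.V n, Stmt16Aux.V_isLift n hn,
      fun v hv => Stmt16Aux.lift_unique n hn v hv⟩
  · intro v hv
    rw [Stmt16Aux.lift_unique n hn v hv]
    simp [Stmt16Aux.V, Stmt16Aux.vd, Fin.val_last]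
end
end

section
/- (The Kerr splitting identity, Example 3.20 with m = 1/2.) On ℍ°, with r := √(ρ²+z²), define Φ^∞ := ((2r+1)ρ)⁻¹ [[2r, −(r+z)],[−(r+z), (r+z)(ρ² + (r−z+1)²)]], and define Φ^{TN⁺} := ρ⁻¹[[H⁻¹, H⁻¹A],[H⁻¹A, Hρ² + H⁻¹A²]] with H := 1 + 1/(2r) and A := z/(2r). Then Φ^∞ is symmetric with det Φ^∞ ≡ 1, and for all (ρ,z) ∈ ℍ°: U_{1/2}ᵀ · Φ^∞(ρ,z) · U_{1/2} = Φ^{TN⁺}(ρ, −z), where U_{1/2} := [[1, 1/2],[0, 1]]; that is, U_{−1/2}.Φ^∞ = η*Φ^{TN⁺} with η(ρ,z) = (ρ,−z). -/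
noncomputable section

open Real Topology Filter Matrix MeasureTheory

/-- `H = 1 + 1/(2r)`. -/
def Hk (p : ℝ × ℝ) : ℝ := 1 + 1 / (2 * rr p)

/-- `A = z/(2r)`. -/
def Ak (p : ℝ × ℝ) : ℝ := p.2 / (2 * rr p)

/-- The pointed limit `Φ^∞` of the Euclidean Kerr harmonic maps (with `m = 1/2`). -/
def ΦKerrInf (p : ℝ × ℝ) : Mat2 :=
  ((2 * rr p + 1) * p.1)⁻¹ •
    !![2 * rr p, -(rr p + p.2);
       -(rr p + p.2), (rr p + p.2) * (p.1 ^ 2 + (rr p - p.2 + 1) ^ 2)]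

/-- The Taub-NUT harmonic map `Φ^{TN⁺} = ρ⁻¹[[H⁻¹, H⁻¹A],[H⁻¹A, Hρ² + H⁻¹A²]]`. -/
def ΦTNp (p : ℝ × ℝ) : Mat2 :=
  p.1⁻¹ • !![(Hk p)⁻¹, (Hk p)⁻¹ * Ak p;
             (Hk p)⁻¹ * Ak p, Hk p * p.1 ^ 2 + (Hk p)⁻¹ * (Ak p) ^ 2]

lemma smul2 (c a b d e : ℝ) : c • !![a, b; d, e] = !![c*a, c*b; c*d, c*e] := by
  ext i j
  fin_cases i <;> fin_cases j <;> simp [Matrix.smul_apply]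

lemma tr2 (a b c d : ℝ) : (!![a, b; c, d] : Mat2)ᵀ = !![a, c; b, d] := by
  ext i j
  fin_cases i <;> fin_cases j <;> simp

lemma eq2 {a b c d a' b' c' d' : ℝ} (h1 : a = a') (h2 : b = b') (h3 : c = c')
    (h4 : d = d') : (!![a, b; c, d] : Mat2) = !![a', b'; c', d'] := by
  rw [h1, h2, h3, h4]

/-- **the Kerr splitting identity, Example 3.20 with `m = 1/2`.**
`Φ^∞` is symmetric of determinant `1`, and `U_{1/2}ᵀ · Φ^∞(ρ,z) · U_{1/2} = Φ^{TN⁺}(ρ,−z)`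
on `ℍ°`; i.e. `U_{−1/2}.Φ^∞ = η*Φ^{TN⁺}` with `η(ρ,z) = (ρ,−z)`. -/
theorem stmt18 :
    ∀ p ∈ Hplane,
      (ΦKerrInf p).IsSymm ∧
      (ΦKerrInf p).det = 1 ∧
      (UM (1 / 2))ᵀ * ΦKerrInf p * UM (1 / 2) = ΦTNp (p.1, -p.2) ∧
      matAct (UM (-(1 / 2))) (ΦKerrInf p) = ΦTNp (p.1, -p.2) := by
  intro p hp
  obtain ⟨ρ, z⟩ := p
  have hρ : (0:ℝ) < ρ := hp
  have hrnn : (0:ℝ) ≤ ρ ^ 2 + z ^ 2 := by positivity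
  have hr2 : rr (ρ, z) ^ 2 = ρ ^ 2 + z ^ 2 := Real.sq_sqrt hrnn
  have hrpos : 0 < rr (ρ, z) := Real.sqrt_pos.mpr (by positivity)
  have hrr' : rr (ρ, -z) = rr (ρ, z) := by simp [rr, neg_sq]
  set r := rr (ρ, z) with hrdef
  have hrz : 0 < 2 * r + 1 := by linarith
  have hρ0 : ρ ≠ 0 := ne_of_gt hρ
  have hr0 : r ≠ 0 := ne_of_gt hrpos
  have hrz0 : (2 * r + 1) ≠ 0 := ne_of_gt hrz
  set c : ℝ := ((2 * r + 1) * ρ)⁻¹ with hc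
  have hK : ΦKerrInf (ρ, z) =
      !![c * (2 * r), c * (-(r + z));
         c * (-(r + z)), c * ((r + z) * (ρ ^ 2 + (r - z + 1) ^ 2))] := by
    rw [ΦKerrInf, smul2]
  have hH : Hk (ρ, -z) = (2 * r + 1) / (2 * r) := by
    simp only [Hk, hrr', ← hrdef]
    field_simp
  have hA : Ak (ρ, -z) = -z / (2 * r) := by
    simp only [Ak, hrr', ← hrdef]
  have hTN : ΦTNp (ρ, -z) =
      !![ρ⁻¹ * (2 * r / (2 * r + 1)), ρ⁻¹ * ((2 * r / (2 * r + 1)) * (-z / (2 * r)));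
         ρ⁻¹ * ((2 * r / (2 * r + 1)) * (-z / (2 * r))),
         ρ⁻¹ * (((2 * r + 1) / (2 * r)) * ρ ^ 2 + (2 * r / (2 * r + 1)) * (-z / (2 * r)) ^ 2)] := by
    rw [ΦTNp, hH, hA, inv_div, smul2]
  have hsymm : (ΦKerrInf (ρ, z)).IsSymm := by
    rw [hK, Matrix.IsSymm, tr2]
  have hmain : (UM (1 / 2))ᵀ * ΦKerrInf (ρ, z) * UM (1 / 2) = ΦTNp (ρ, -z) := by
    rw [hK, hTN, UM, tr2, Matrix.mul_fin_two, Matrix.mul_fin_two]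
    apply eq2
    · rw [hc]; field_simp; ring
    · rw [hc]; field_simp; ring
    · rw [hc]; field_simp; ring
    · rw [hc]; field_simp
      linear_combination (1 + 4 * r + 2 * r^2 - 2 * r * z) * hr2
  refine ⟨hsymm, ?_, hmain, ?_⟩
  · rw [hK, Matrix.det_fin_two_of]
    have key : c * (2 * r) * (c * ((r + z) * (ρ ^ 2 + (r - z + 1) ^ 2))) -
        c * (-(r + z)) * (c * (-(r + z)))
        = c ^ 2 * (((2 * r + 1) * ρ) ^ 2) := by
      have : 2 * r * ((r + z) * (ρ ^ 2 + (r - z + 1) ^ 2)) - (r + z) * (r + z)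
          = ((2 * r + 1) * ρ) ^ 2 := by
        linear_combination (1 + 4 * r - 2 * r * z + 2 * r^2) * hr2
      nlinarith [this]
    rw [key, hc]
    field_simp
  · have hinv : (UM (-(1 / 2)))⁻¹ = UM (1 / 2) := by
      apply Matrix.inv_eq_right_inv
      show (!![1, -(1/2); 0, 1] : Mat2) * !![1, 1/2; 0, 1] = 1
      rw [Matrix.mul_fin_two, Matrix.one_fin_two]
      norm_num
    rw [matAct, hinv]
    exact hmain
end
end
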